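/- arXiv:2112.12963 — 4 statements merged into one kernel-verified Lean document; each statement's English description precedes it below -/
import Mathlib

section
/- For every Young diagram Y contained in the rectangular Young diagram Y_{m,n}, the sequence d(Y) = (d_{-m}(Y), …, d_n(Y)) belongs to D_{m,n}, and the map d : F(Y_{m,n}) → D_{m,n}, Y ↦ d(Y), is a bijection. -/
open Finset

/-- The rectangular Young diagram `Y_{m,n}` (boxes are 1-based pairs `(i,j)`). -/
def rect (m n : ℕ) : Finset (ℕ × ℕ) := Finset.Icc 1 m ×ˢ Finset.Icc 1 n

/-- `Y` is a Young diagram: a finite set of 1-based boxes, downward closed. -/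
def IsYD (Y : Finset (ℕ × ℕ)) : Prop :=
  (∀ p ∈ Y, 1 ≤ p.1 ∧ 1 ≤ p.2) ∧
  (∀ p ∈ Y, ∀ q : ℕ × ℕ, 1 ≤ q.1 → 1 ≤ q.2 → q.1 ≤ p.1 → q.2 ≤ p.2 → q ∈ Y)

/-- `d_k(Y)`: the number of boxes of `Y` on the `k`-th diagonal `j - i = k`. -/
def dk (Y : Finset (ℕ × ℕ)) (k : ℤ) : ℤ :=
  ((Y.filter fun p => (p.2 : ℤ) - (p.1 : ℤ) = k).card : ℤ)

/-- The set `D_{m,n}` of diagonal sequences: non-negative, vanishing outside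
`(-m, n)`, and satisfying the adjacency condition. -/
def Dseq (m n : ℕ) (a : ℤ → ℤ) : Prop :=
  (∀ k : ℤ, 0 ≤ a k) ∧
  (∀ k : ℤ, k ≤ -(m : ℤ) → a k = 0) ∧
  (∀ k : ℤ, (n : ℤ) ≤ k → a k = 0) ∧
  (∀ i : ℤ, -(m : ℤ) < i → i ≤ 0 → a (i - 1) ≤ a i ∧ a i ≤ a (i - 1) + 1) ∧
  (∀ i : ℤ, 0 < i → i ≤ (n : ℤ) → a i ≤ a (i - 1) ∧ a (i - 1) ≤ a i + 1)

/-- `a_{[l,r]}`: subtract `1` from the components indexed by `l ≤ k ≤ r`. -/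
def cut (a : ℤ → ℤ) (l r : ℤ) : ℤ → ℤ := fun k => if l ≤ k ∧ k ≤ r then a k - 1 else a k

/-- The pair `(x,y)` sitting at positions `(k-1,k)` satisfies the adjacency condition. -/
def adjPair (k x y : ℤ) : Prop := if k ≤ 0 then x ≤ y ∧ y ≤ x + 1 else y ≤ x ∧ x ≤ y + 1

/-- `(a_{k-1}, a_k)` is a left bulge, `a_{k-1} ↘ a_k`. -/
def leftBulge (a : ℤ → ℤ) (k : ℤ) : Prop :=
  adjPair k (a (k - 1)) (a k) ∧ adjPair k (a (k - 1) - 1) (a k)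

/-- `(a_{k-1}, a_k)` is a right bulge, `a_{k-1} ↗ a_k`. -/
def rightBulge (a : ℤ → ℤ) (k : ℤ) : Prop :=
  adjPair k (a (k - 1)) (a k) ∧ adjPair k (a (k - 1)) (a k - 1)

/-- The map `E` duplicating the `c`-th component of a sequence. -/
def Emap (c : ℤ) (a : ℤ → ℤ) : ℤ → ℤ := fun k => if k ≤ c then a k else a (k - 1)

def el (c k : ℤ) : ℤ := if k ≤ c then k else k + 1

def er (c k : ℤ) : ℤ := if k < c then k else k + 1

/-- The unimodal numbering `α_{m,n}(i,j) = min (j-i+m) (i-j+n)`. -/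
def unimodal (m n : ℕ) (p : ℕ × ℕ) : ℤ :=
  min ((p.2 : ℤ) - (p.1 : ℤ) + m) ((p.1 : ℤ) - (p.2 : ℤ) + n)

/-- `A(X)`: the multiset of unimodal numbers of the boxes of `X`. -/
def Amul (m n : ℕ) (X : Finset (ℕ × ℕ)) : Multiset ℤ := X.val.map (unimodal m n)

/-- The hook of the box `(i,j)` in `Y`. -/
def hook (Y : Finset (ℕ × ℕ)) (i j : ℕ) : Finset (ℕ × ℕ) :=
  Y.filter fun p => (p.1 = i ∧ j ≤ p.2) ∨ (p.2 = j ∧ i ≤ p.1)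

/-- After removing the hook of `(i,j)`, boxes strictly south-east of `(i,j)` move
up-left by one step. -/
def shiftBox (i j : ℕ) (p : ℕ × ℕ) : ℕ × ℕ :=
  if i < p.1 ∧ j < p.2 then (p.1 - 1, p.2 - 1) else p

/-- The Young diagram `Y ∖ h_Y(i,j)` obtained by removing the hook of `(i,j)`. -/
def removeHook (Y : Finset (ℕ × ℕ)) (i j : ℕ) : Finset (ℕ × ℕ) :=
  (Y \ hook Y i j).image (shiftBox i j)

/-- One move of MHRG(m,n): remove a hook; if the resulting diagram has a hook with
the same multiset of unimodal numbers, one such hook must also be removed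
(this second removal happens at most once). -/
def Move (m n : ℕ) (Y Y' : Finset (ℕ × ℕ)) : Prop :=
  ∃ i j : ℕ, (i, j) ∈ Y ∧
    ((Y' = removeHook Y i j ∧
        ¬∃ i' j' : ℕ, (i', j') ∈ removeHook Y i j ∧
          Amul m n (hook (removeHook Y i j) i' j') = Amul m n (hook Y i j)) ∨
      (∃ i' j' : ℕ, (i', j') ∈ removeHook Y i j ∧
        Amul m n (hook (removeHook Y i j) i' j') = Amul m n (hook Y i j) ∧
        Y' = removeHook (removeHook Y i j) i' j'))

/-- `T(Y_{m,n})`: the positions of MHRG(m,n) reachable from the starting position. -/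
def Reach (m n : ℕ) (Y : Finset (ℕ × ℕ)) : Prop :=
  Relation.ReflTransGen (Move m n) (rect m n) Y

/-- `O(Y)`: the set of options of a position `Y` in MHRG(m,n). -/
def Opt (m n : ℕ) (Y : Finset (ℕ × ℕ)) : Set (Finset (ℕ × ℕ)) := {Y' | Move m n Y Y'}

lemma card_removeHook_lt (Y : Finset (ℕ × ℕ)) (i j : ℕ) (h : (i, j) ∈ Y) :
    (removeHook Y i j).card < Y.card := by
  have hsub : hook Y i j ⊆ Y := Finset.filter_subset _ _
  have hmem : (i, j) ∈ hook Y i j :=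
    Finset.mem_filter.mpr ⟨h, Or.inl ⟨rfl, le_rfl⟩⟩
  have h1 : (removeHook Y i j).card ≤ (Y \ hook Y i j).card := Finset.card_image_le
  have h2 : (Y \ hook Y i j).card = Y.card - (hook Y i j).card := by
    rw [Finset.card_sdiff, Finset.inter_eq_left.mpr hsub]
  have h3 : 0 < (hook Y i j).card := Finset.card_pos.mpr ⟨_, hmem⟩
  have h4 : (hook Y i j).card ≤ Y.card := Finset.card_le_card hsub
  omega

lemma move_card_lt {m n : ℕ} {Y Y' : Finset (ℕ × ℕ)} (h : Move m n Y Y') :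
    Y'.card < Y.card := by
  obtain ⟨i, j, hij, hc⟩ := h
  rcases hc with ⟨rfl, -⟩ | ⟨i', j', hij', -, rfl⟩
  · exact card_removeHook_lt Y i j hij
  · exact (card_removeHook_lt _ i' j' hij').trans (card_removeHook_lt Y i j hij)

/-- The minimal excludant. -/
noncomputable def mex (s : Set ℕ) : ℕ := sInf {k | k ∉ s}

/-- The Grundy value of a position of MHRG(m,n). -/
noncomputable def grundy (m n : ℕ) (Y : Finset (ℕ × ℕ)) : ℕ :=
  mex {g : ℕ | ∃ Y', ∃ _ : Move m n Y Y', grundy m n Y' = g}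
termination_by Y.card
decreasing_by exact move_card_lt (by assumption)

/-- The two-row Young diagram `(λ₁, λ₂)`. -/
def tworow (a b : ℕ) : Finset (ℕ × ℕ) :=
  ({1} : Finset ℕ) ×ˢ Finset.Icc 1 a ∪ ({2} : Finset ℕ) ×ˢ Finset.Icc 1 b

/-- `S` is a shifted Young diagram: rows are intervals `[i, λ_i]` with `λ` strictly
decreasing. -/
def IsShifted (S : Finset (ℕ × ℕ)) : Prop :=
  (∀ p ∈ S, 1 ≤ p.1 ∧ p.1 ≤ p.2) ∧
  (∀ p ∈ S, ∀ j' : ℕ, p.1 ≤ j' → j' ≤ p.2 → (p.1, j') ∈ S) ∧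
  (∀ p ∈ S, 2 ≤ p.1 → (p.1 - 1, p.2 + 1) ∈ S)

/-- The shifted Young diagram of a (strictly decreasing, positive) list of row lengths. -/
def shiftedOf (l : List ℕ) : Finset (ℕ × ℕ) :=
  (Finset.range l.length).biUnion fun i =>
    ({i + 1} : Finset ℕ) ×ˢ Finset.Icc (i + 1) (l.getD i 0)

/-- The staircase `S_n = (n, n-1, …, 1)`. -/
def staircase (n : ℕ) : List ℕ := (List.range n).map fun i => n - i

/-- The shifted hook of the box `(i,j)` in `S` (box, arm, leg and tail). -/
def shook (S : Finset (ℕ × ℕ)) (i j : ℕ) : Finset (ℕ × ℕ) :=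
  S.filter fun p => (p.1 = i ∧ j ≤ p.2) ∨ (p.2 = j ∧ i ≤ p.1) ∨ (p.1 = j + 1 ∧ j < p.2)

/-- The shifting of boxes performed after removing the shifted hook of `(i,j)`. -/
def sShiftBox (i j : ℕ) (p : ℕ × ℕ) : ℕ × ℕ :=
  if i < p.1 ∧ p.1 < j + 1 ∧ j < p.2 then (p.1 - 1, p.2 - 1)
  else if j + 1 < p.1 then (p.1 - 2, p.2 - 2)
  else p

/-- The shifted Young diagram obtained by removing the shifted hook of `(i,j)`. -/
def sRemoveHook (S : Finset (ℕ × ℕ)) (i j : ℕ) : Finset (ℕ × ℕ) :=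
  (S \ shook S i j).image (sShiftBox i j)

/-- One move of HRG on shifted Young diagrams: remove one hook. -/
def SMove (S S' : Finset (ℕ × ℕ)) : Prop :=
  ∃ i j : ℕ, (i, j) ∈ S ∧ S' = sRemoveHook S i j

lemma card_sRemoveHook_lt (S : Finset (ℕ × ℕ)) (i j : ℕ) (h : (i, j) ∈ S) :
    (sRemoveHook S i j).card < S.card := by
  have hsub : shook S i j ⊆ S := Finset.filter_subset _ _
  have hmem : (i, j) ∈ shook S i j :=
    Finset.mem_filter.mpr ⟨h, Or.inl ⟨rfl, le_rfl⟩⟩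
  have h1 : (sRemoveHook S i j).card ≤ (S \ shook S i j).card := Finset.card_image_le
  have h2 : (S \ shook S i j).card = S.card - (shook S i j).card := by
    rw [Finset.card_sdiff, Finset.inter_eq_left.mpr hsub]
  have h3 : 0 < (shook S i j).card := Finset.card_pos.mpr ⟨_, hmem⟩
  have h4 : (shook S i j).card ≤ S.card := Finset.card_le_card hsub
  omega

lemma smove_card_lt {S S' : Finset (ℕ × ℕ)} (h : SMove S S') : S'.card < S.card := by
  obtain ⟨i, j, hij, rfl⟩ := h
  exact card_sRemoveHook_lt S i j hij

/-- The Grundy value of a position of HRG on shifted Young diagrams. -/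
noncomputable def sgrundy (S : Finset (ℕ × ℕ)) : ℕ :=
  mex {g : ℕ | ∃ S', ∃ _ : SMove S S', sgrundy S' = g}
termination_by S.card
decreasing_by exact smove_card_lt (by assumption)

/-- `OH(Y)` for a two-row diagram `Y = (λ₁,λ₂)`: the results of single hook removals. -/
def OH (l1 l2 : ℕ) : Set (Finset (ℕ × ℕ)) :=
  {Y | ∃ a : ℕ, l2 ≤ a ∧ a < l1 ∧ Y = tworow a l2} ∪
  {Y | ∃ b : ℕ, b < l2 ∧ Y = tworow l1 b} ∪
  {Y | ∃ a : ℕ, a < l2 ∧ Y = tworow (l2 - 1) a}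


lemma dk_lower {Y : Finset (ℕ × ℕ)} (hY : IsYD Y) {i j : ℕ} (h : (i, j) ∈ Y) :
    (min i j : ℤ) ≤ dk Y ((j : ℤ) - i) := by
  obtain ⟨hi, hj⟩ := hY.1 _ h
  simp only at hi hj
  have hcard : (Finset.range (min i j)).card ≤
      (Y.filter fun p => (p.2 : ℤ) - (p.1 : ℤ) = (j : ℤ) - i).card := by
    apply Finset.card_le_card_of_injOn (fun t => (i - t, j - t))
    · intro t ht
      simp only [Finset.coe_range, Set.mem_Iio] at ht
      beta_reduce
      refine Finset.mem_filter.mpr ⟨hY.2 _ h _ (by omega) (by omega) (by omega) (by omega), ?_⟩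
      simp only
      omega
    · intro t ht t' ht' he
      simp only [Finset.coe_range, Set.mem_Iio] at ht ht'
      simp only [Prod.mk.injEq] at he
      omega
  simp only [Finset.card_range] at hcard
  unfold dk
  exact_mod_cast hcard

lemma mem_of_dk {Y : Finset (ℕ × ℕ)} (hY : IsYD Y) {i j : ℕ} (hi : 1 ≤ i) (hj : 1 ≤ j)
    (h : (min i j : ℤ) ≤ dk Y ((j : ℤ) - i)) : (i, j) ∈ Y := by
  set D := Y.filter fun p => (p.2 : ℤ) - (p.1 : ℤ) = (j : ℤ) - i with hD
  have hcard : min i j ≤ D.card := by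
    unfold dk at h
    rw [← hD] at h
    omega
  have hne : D.Nonempty := Finset.card_pos.mp (by omega)
  set img := D.image (fun p => min p.1 p.2) with himg
  have hinj : Set.InjOn (fun p : ℕ × ℕ => min p.1 p.2) D := by
    intro p hp q hq he
    simp only [hD, Finset.mem_coe, Finset.mem_filter] at hp hq
    simp only at he
    have : p.1 = q.1 ∧ p.2 = q.2 := by omega
    exact Prod.ext this.1 this.2
  have hci : D.card = img.card := (Finset.card_image_of_injOn hinj).symm
  have hni : img.Nonempty := hne.image _
  set M := img.max' hni with hM
  have hsub : img ⊆ Finset.Icc 1 M := by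
    intro x hx
    simp only [himg, Finset.mem_image] at hx
    obtain ⟨p, hp, rfl⟩ := hx
    have := hY.1 p (Finset.mem_filter.mp hp).1
    refine Finset.mem_Icc.mpr ⟨by omega, Finset.le_max' _ _ ?_⟩
    exact Finset.mem_image_of_mem _ hp
  have hcM : img.card ≤ M := by
    have := Finset.card_le_card hsub
    simpa [Nat.card_Icc] using this
  obtain ⟨p, hp, hpM⟩ := Finset.mem_image.mp (img.max'_mem hni)
  obtain ⟨hpY, hpd⟩ := Finset.mem_filter.mp hp
  have hle : i ≤ p.1 ∧ j ≤ p.2 := by omega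
  exact hY.2 p hpY (i, j) hi hj hle.1 hle.2

lemma dk_nonneg (Y : Finset (ℕ × ℕ)) (k : ℤ) : 0 ≤ dk Y k := Int.natCast_nonneg _

lemma dk_eq_card (Y : Finset (ℕ × ℕ)) (k : ℤ) :
    dk Y k = ((Y.filter fun p => (p.2 : ℤ) - (p.1 : ℤ) = k).card : ℤ) := rfl

lemma dk_vanish {m n : ℕ} {Y : Finset (ℕ × ℕ)} (hsub : Y ⊆ rect m n) {k : ℤ}
    (hk : k ≤ -(m : ℤ) ∨ (n : ℤ) ≤ k) : dk Y k = 0 := by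
  have he : (Y.filter fun p => (p.2 : ℤ) - (p.1 : ℤ) = k) = ∅ := by
    rw [Finset.filter_eq_empty_iff]
    intro p hp
    have := hsub hp
    simp only [rect, Finset.mem_product, Finset.mem_Icc] at this
    rcases hk with hk | hk <;> omega
  rw [dk_eq_card, he]
  simp

lemma forward {m n : ℕ} {Y : Finset (ℕ × ℕ)} (hY : IsYD Y) (hsub : Y ⊆ rect m n) :
    Dseq m n (dk Y) := by
  have hboxY : ∀ p ∈ Y, 1 ≤ p.1 ∧ p.1 ≤ m ∧ 1 ≤ p.2 ∧ p.2 ≤ n := by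
    intro p hp
    have := hsub hp
    simp only [rect, Finset.mem_product, Finset.mem_Icc] at this
    omega
  refine ⟨dk_nonneg Y, fun k hk => dk_vanish hsub (Or.inl hk),
    fun k hk => dk_vanish hsub (Or.inr hk), ?_, ?_⟩
  · -- left adjacency: -m < i ≤ 0
    intro k hkm hk0
    constructor
    · -- dk (k-1) ≤ dk k
      rcases le_or_gt (dk Y (k - 1)) 0 with h | h
      · exact h.trans (dk_nonneg Y k)
      · set c := (dk Y (k - 1)).toNat with hc
        have hc1 : 1 ≤ c := by omega
        have hmem : ((c + 1 - k).toNat, c) ∈ Y := by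
          apply mem_of_dk hY (by omega) (by omega)
          have h1 : ((c : ℤ)) - ((c + 1 - k).toNat : ℤ) = k - 1 := by omega
          rw [h1]
          have h2 : (min (c + 1 - k).toNat c : ℤ) = c := by omega
          rw [h2]
          omega
        have hmem2 : ((c - k).toNat, c) ∈ Y :=
          hY.2 _ hmem _ (by omega) (by omega) (by omega) (by omega)
        have := dk_lower hY hmem2
        have h1 : ((c : ℤ)) - ((c - k).toNat : ℤ) = k := by omega
        rw [h1] at this
        omega
    · -- dk k ≤ dk (k-1) + 1
      rcases le_or_gt (dk Y k) 1 with h | h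
      · have := dk_nonneg Y (k - 1); omega
      · set c := (dk Y k).toNat with hc
        have hc2 : 2 ≤ c := by omega
        have hmem : ((c - k).toNat, c) ∈ Y := by
          apply mem_of_dk hY (by omega) (by omega)
          have h1 : ((c : ℤ)) - ((c - k).toNat : ℤ) = k := by omega
          rw [h1]
          omega
        have hmem2 : ((c - k).toNat, c - 1) ∈ Y :=
          hY.2 _ hmem _ (by omega) (by omega) (by omega) (by omega)
        have := dk_lower hY hmem2
        have h1 : (((c - 1 : ℕ)) : ℤ) - ((c - k).toNat : ℤ) = k - 1 := by omega
        rw [h1] at this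
        omega
  · -- right adjacency: 0 < k ≤ n
    intro k hk0 hkn
    constructor
    · -- dk k ≤ dk (k-1)
      rcases le_or_gt (dk Y k) 0 with h | h
      · exact h.trans (dk_nonneg Y (k - 1))
      · set c := (dk Y k).toNat with hc
        have hc1 : 1 ≤ c := by omega
        have hmem : (c, (c + k).toNat) ∈ Y := by
          apply mem_of_dk hY (by omega) (by omega)
          have h1 : (((c + k).toNat : ℕ) : ℤ) - (c : ℤ) = k := by omega
          rw [h1]
          omega
        have hmem2 : (c, (c + k - 1).toNat) ∈ Y :=
          hY.2 _ hmem _ (by omega) (by omega) (by omega) (by omega)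
        have := dk_lower hY hmem2
        have h1 : (((c + k - 1).toNat : ℕ) : ℤ) - (c : ℤ) = k - 1 := by omega
        rw [h1] at this
        omega
    · -- dk (k-1) ≤ dk k + 1
      rcases le_or_gt (dk Y (k - 1)) 1 with h | h
      · have := dk_nonneg Y k; omega
      · set c := (dk Y (k - 1)).toNat with hc
        have hc2 : 2 ≤ c := by omega
        have hmem : (c, (c + k - 1).toNat) ∈ Y := by
          apply mem_of_dk hY (by omega) (by omega)
          have h1 : (((c + k - 1).toNat : ℕ) : ℤ) - (c : ℤ) = k - 1 := by omega
          rw [h1]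
          omega
        have hmem2 : (c - 1, (c + k - 1).toNat) ∈ Y :=
          hY.2 _ hmem _ (by omega) (by omega) (by omega) (by omega)
        have := dk_lower hY hmem2
        have h1 : (((c + k - 1).toNat : ℕ) : ℤ) - (((c - 1 : ℕ)) : ℤ) = k := by omega
        rw [h1] at this
        omega

section Inverse
variable {m n : ℕ} {a : ℤ → ℤ}

lemma boundR (ha : Dseq m n a) : ∀ j : ℕ, j ≤ n → a ((n : ℤ) - j) ≤ j := by
  intro j
  induction j with
  | zero => intro _; simp [ha.2.2.1 n le_rfl]
  | succ j ih =>
    intro hj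
    have hadj := ha.2.2.2.2 ((n : ℤ) - j) (by omega) (by omega)
    have h1 : (n : ℤ) - (j + 1 : ℕ) = (n : ℤ) - j - 1 := by push_cast; ring
    rw [h1]
    have := ih (by omega)
    omega

lemma boundL (ha : Dseq m n a) : ∀ j : ℕ, j ≤ m → a (-(m : ℤ) + j) ≤ j := by
  intro j
  induction j with
  | zero => intro _; simp [ha.2.1 (-(m:ℤ)) le_rfl]
  | succ j ih =>
    intro hj
    have hadj := ha.2.2.2.1 (-(m : ℤ) + (j + 1)) (by omega) (by omega)
    have h1 : -(m : ℤ) + ((j + 1 : ℕ) : ℤ) = -(m : ℤ) + (j + 1) := by push_cast; ring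
    rw [h1]
    have h2 : -(m : ℤ) + (j + 1) - 1 = -(m : ℤ) + j := by ring
    rw [h2] at hadj
    have := ih (by omega)
    omega

lemma monoR (ha : Dseq m n a) : ∀ (j : ℕ) (k : ℤ), 0 ≤ k → a (k + j) ≤ a k := by
  intro j
  induction j with
  | zero => intro k _; simp
  | succ j ih =>
    intro k hk
    have h1 : k + ((j + 1 : ℕ) : ℤ) = (k + j) + 1 := by push_cast; ring
    rw [h1]
    rcases le_or_gt (k + j + 1) n with h | h
    · have hadj := ha.2.2.2.2 (k + j + 1) (by omega) h
      have h2 : k + j + 1 - 1 = k + (j : ℤ) := by ring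
      rw [h2] at hadj
      have := ih k hk
      omega
    · rw [ha.2.2.1 _ (by omega)]
      exact ha.1 k

lemma monoL (ha : Dseq m n a) : ∀ (j : ℕ) (l : ℤ), l ≤ 0 → a (l - j) ≤ a l := by
  intro j
  induction j with
  | zero => intro l _; simp
  | succ j ih =>
    intro l hl
    have h1 : l - ((j + 1 : ℕ) : ℤ) = (l - j) - 1 := by push_cast; ring
    rw [h1]
    rcases lt_or_ge (-(m : ℤ)) (l - j) with h | h
    · have hadj := ha.2.2.2.1 (l - j) h (by omega)
      have := ih l hl
      omega
    · rw [ha.2.1 _ (by omega)]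
      exact ha.1 l

lemma aBoundsR (ha : Dseq m n a) {k : ℤ} (h0 : 0 ≤ k) (hkn : k < n) :
    a k ≤ m ∧ a k + k ≤ n := by
  have hm0 : a 0 ≤ m := by
    have := boundL ha m le_rfl
    simpa using this
  have hk0 : a k ≤ a 0 := by
    have := monoR ha k.toNat 0 le_rfl
    have h1 : (0 : ℤ) + (k.toNat : ℤ) = k := by omega
    rwa [h1] at this
  have hkn' : a k ≤ n - k := by
    have := boundR ha (n - k).toNat (by omega)
    have h1 : (n : ℤ) - ((n - k).toNat : ℤ) = k := by omega
    rw [h1] at this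
    omega
  omega

lemma aBoundsL (ha : Dseq m n a) {k : ℤ} (h0 : k ≤ 0) (hkm : -(m : ℤ) < k) :
    a k ≤ n ∧ a k ≤ m + k := by
  have hn0 : a 0 ≤ n := by
    have := boundR ha n le_rfl
    simpa using this
  have hk0 : a k ≤ a 0 := by
    have := monoL ha (-k).toNat 0 le_rfl
    have h1 : (0 : ℤ) - ((-k).toNat : ℤ) = k := by omega
    rwa [h1] at this
  have hkm' : a k ≤ m + k := by
    have := boundL ha (k + m).toNat (by omega)
    have h1 : -(m : ℤ) + ((k + m).toNat : ℤ) = k := by omega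
    rw [h1] at this
    omega
  omega

lemma stepI (ha : Dseq m n a) {i j : ℕ} (hi : 2 ≤ i) (him : i ≤ m) (hj : 1 ≤ j) (hjn : j ≤ n)
    (h : (min i j : ℤ) ≤ a ((j : ℤ) - i)) :
    min (((i - 1 : ℕ)) : ℤ) (j : ℤ) ≤ a ((j : ℤ) - ((i - 1 : ℕ) : ℤ)) := by
  have h1 : (j : ℤ) - ((i - 1 : ℕ) : ℤ) = ((j : ℤ) - i) + 1 := by omega
  rw [h1]
  rcases le_or_gt i j with hij | hij
  · have hadj := ha.2.2.2.2 ((j : ℤ) - i + 1) (by omega) (by omega)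
    have h2 : (j : ℤ) - i + 1 - 1 = (j : ℤ) - i := by ring
    rw [h2] at hadj
    omega
  · have hadj := ha.2.2.2.1 ((j : ℤ) - i + 1) (by omega) (by omega)
    have h2 : (j : ℤ) - i + 1 - 1 = (j : ℤ) - i := by ring
    rw [h2] at hadj
    omega

lemma stepJ (ha : Dseq m n a) {i j : ℕ} (hi : 1 ≤ i) (him : i ≤ m) (hj : 2 ≤ j) (hjn : j ≤ n)
    (h : (min i j : ℤ) ≤ a ((j : ℤ) - i)) :
    min (i : ℤ) (((j - 1 : ℕ)) : ℤ) ≤ a (((j - 1 : ℕ) : ℤ) - i) := by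
  have h1 : ((j - 1 : ℕ) : ℤ) - (i : ℤ) = ((j : ℤ) - i) - 1 := by omega
  rw [h1]
  rcases le_or_gt j i with hij | hij
  · have hadj := ha.2.2.2.1 ((j : ℤ) - i) (by omega) (by omega)
    omega
  · have hadj := ha.2.2.2.2 ((j : ℤ) - i) (by omega) (by omega)
    omega

lemma descend (ha : Dseq m n a) : ∀ (N i j i' j' : ℕ), i + j ≤ N → 1 ≤ i' → 1 ≤ j' →
    i' ≤ i → j' ≤ j → i ≤ m → j ≤ n → (min i j : ℤ) ≤ a ((j : ℤ) - i) →
    (min i' j' : ℤ) ≤ a ((j' : ℤ) - i') := by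
  intro N
  induction N with
  | zero => intro i j i' j' hN h1 h2 h3 h4 _ _ _; exact absurd hN (by omega)
  | succ N ih =>
    intro i j i' j' hN h1 h2 h3 h4 him hjn h
    rcases lt_or_eq_of_le h3 with hlt | heq
    · exact ih (i - 1) j i' j' (by omega) h1 h2 (by omega) h4 (by omega) hjn
        (stepI ha (by omega) him (by omega) hjn h)
    · subst heq
      rcases lt_or_eq_of_le h4 with hlt | heq
      · exact ih i' (j - 1) i' j' (by omega) h1 h2 le_rfl (by omega) him (by omega)
          (stepJ ha h1 him (by omega) hjn h)
      · subst heq; exact h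

def Yof (m n : ℕ) (a : ℤ → ℤ) : Finset (ℕ × ℕ) :=
  (rect m n).filter fun p => (min p.1 p.2 : ℤ) ≤ a ((p.2 : ℤ) - (p.1 : ℤ))

lemma isYD_Yof (ha : Dseq m n a) : IsYD (Yof m n a) := by
  constructor
  · intro p hp
    simp only [Yof, rect, Finset.mem_filter, Finset.mem_product, Finset.mem_Icc] at hp
    exact ⟨hp.1.1.1, hp.1.2.1⟩
  · intro p hp q hq1 hq2 hq3 hq4
    simp only [Yof, rect, Finset.mem_filter, Finset.mem_product, Finset.mem_Icc] at hp ⊢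
    obtain ⟨⟨⟨_, h2⟩, _, h4⟩, h5⟩ := hp
    refine ⟨⟨⟨hq1, by omega⟩, hq2, by omega⟩, ?_⟩
    exact descend ha (p.1 + p.2) p.1 p.2 q.1 q.2 le_rfl hq1 hq2 hq3 hq4 h2 h4 h5

lemma dk_Yof (ha : Dseq m n a) : dk (Yof m n a) = a := by
  funext k
  have hsub : Yof m n a ⊆ rect m n := Finset.filter_subset _ _
  rcases le_or_gt (n : ℤ) k with hk | hk
  · rw [dk_vanish hsub (Or.inr hk), ha.2.2.1 k hk]
  rcases le_or_gt k (-(m : ℤ)) with hk2 | hk2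
  · rw [dk_vanish hsub (Or.inl hk2), ha.2.1 k hk2]
  have h0a := ha.1 k
  rcases le_or_gt 0 k with h0 | h0
  · obtain ⟨hb1, hb2⟩ := aBoundsR ha h0 hk
    have himg : (Yof m n a).filter (fun p => (p.2 : ℤ) - (p.1 : ℤ) = k) =
        (Finset.Icc 1 (a k).toNat).image (fun t => (t, t + k.toNat)) := by
      ext ⟨i, j⟩
      simp only [Yof, Finset.mem_filter, rect, Finset.mem_product, Finset.mem_Icc,
        Finset.mem_image, Prod.mk.injEq]
      constructor
      · rintro ⟨⟨⟨⟨h1, h2⟩, h3, h4⟩, h5⟩, h6⟩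
        rw [h6] at h5
        exact ⟨i, ⟨h1, by omega⟩, rfl, by omega⟩
      · rintro ⟨t, ⟨ht1, ht2⟩, rfl, rfl⟩
        have harg : ((t + k.toNat : ℕ) : ℤ) - (t : ℤ) = k := by omega
        rw [harg]
        exact ⟨⟨⟨⟨ht1, by omega⟩, by omega, by omega⟩, by omega⟩, rfl⟩
    have hinj : Set.InjOn (fun t : ℕ => ((t, t + k.toNat) : ℕ × ℕ)) (Finset.Icc 1 (a k).toNat) := by
      intro x _ y _ hxy
      simpa using congrArg Prod.fst hxy
    rw [dk_eq_card, himg, Finset.card_image_of_injOn hinj]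
    simp only [Nat.card_Icc]
    omega
  · obtain ⟨hb1, hb2⟩ := aBoundsL ha (by omega) hk2
    have himg : (Yof m n a).filter (fun p => (p.2 : ℤ) - (p.1 : ℤ) = k) =
        (Finset.Icc 1 (a k).toNat).image (fun t => (t + (-k).toNat, t)) := by
      ext ⟨i, j⟩
      simp only [Yof, Finset.mem_filter, rect, Finset.mem_product, Finset.mem_Icc,
        Finset.mem_image, Prod.mk.injEq]
      constructor
      · rintro ⟨⟨⟨⟨h1, h2⟩, h3, h4⟩, h5⟩, h6⟩
        rw [h6] at h5
        exact ⟨j, ⟨h3, by omega⟩, by omega, rfl⟩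
      · rintro ⟨t, ⟨ht1, ht2⟩, rfl, rfl⟩
        have harg : ((t : ℕ) : ℤ) - ((t + (-k).toNat : ℕ) : ℤ) = k := by omega
        rw [harg]
        exact ⟨⟨⟨⟨by omega, by omega⟩, by omega, by omega⟩, by omega⟩, rfl⟩
    have hinj : Set.InjOn (fun t : ℕ => ((t + (-k).toNat, t) : ℕ × ℕ)) (Finset.Icc 1 (a k).toNat) := by
      intro x _ y _ hxy
      simpa using congrArg Prod.snd hxy
    rw [dk_eq_card, himg, Finset.card_image_of_injOn hinj]
    simp only [Nat.card_Icc]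
    omega

end Inverse


theorem stmt0 (m n : ℕ) (hm : 1 ≤ m) (hn : 1 ≤ n) :
    (∀ Y : Finset (ℕ × ℕ), IsYD Y → Y ⊆ rect m n → Dseq m n (dk Y)) ∧
    Set.BijOn dk {Y : Finset (ℕ × ℕ) | IsYD Y ∧ Y ⊆ rect m n} {a : ℤ → ℤ | Dseq m n a} := by
  refine ⟨fun Y hY hs => forward hY hs, ?_, ?_, ?_⟩
  · rintro Y ⟨hY, hs⟩
    exact forward hY hs
  · rintro Y ⟨hY, hs⟩ Y' ⟨hY', hs'⟩ he
    ext ⟨i, j⟩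
    by_cases hij : 1 ≤ i ∧ 1 ≤ j
    · constructor
      · intro h
        exact mem_of_dk hY' hij.1 hij.2 (by rw [← he]; exact dk_lower hY h)
      · intro h
        exact mem_of_dk hY hij.1 hij.2 (by rw [he]; exact dk_lower hY' h)
    · constructor
      · intro h; exact absurd (hY.1 _ h) (by simpa using hij)
      · intro h; exact absurd (hY'.1 _ h) (by simpa using hij)
  · rintro a ha
    exact ⟨Yof m n a, ⟨isYD_Yof ha, Finset.filter_subset _ _⟩, dk_Yof ha⟩
end

section
/- Let Y, Y' be Young diagrams contained in Y_{m,n}. The following are equivalent: (1) there exists a box (i,j) ∈ Y such that Y' = Y∖h_Y(i,j); (2) there exist integers −m < l ≤ r < n such that d(Y') = d(Y)_{[l,r]}. Moreover, in this case l = j − i' and r = j' − i, where (i',j) is the bottom box of the j-th column of Y and (i,j') is the rightmost box of the i-th row of Y. -/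
open Finset

lemma mem_iff_dk {Y : Finset (ℕ × ℕ)} (hY : IsYD Y) (a b : ℕ) :
    (a, b) ∈ Y ↔ 1 ≤ a ∧ 1 ≤ b ∧ (min a b : ℤ) ≤ dk Y ((b : ℤ) - (a : ℤ)) := by
  constructor
  · intro h
    obtain ⟨ha, hb⟩ := hY.1 _ h
    refine ⟨ha, hb, ?_⟩
    unfold dk
    have key : (Finset.range (min a b)).card ≤
        (Y.filter fun p => (p.2 : ℤ) - (p.1 : ℤ) = (b : ℤ) - (a : ℤ)).card := by
      apply Finset.card_le_card_of_injOn (fun s => (a - s, b - s))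
      · intro s hs
        simp only [Finset.coe_range, Set.mem_Iio, Finset.mem_range] at hs
        simp only [Finset.mem_coe, Finset.mem_filter]
        refine ⟨hY.2 _ h (a - s, b - s) (by omega) (by omega) (by omega) (by omega), by omega⟩
      · intro s hs t ht hst
        simp only [Finset.coe_range, Set.mem_Iio] at hs ht
        simp only [Prod.mk.injEq] at hst
        omega
    simp only [Finset.card_range] at key
    omega
  · rintro ⟨ha, hb, hmin⟩
    by_contra hab
    have key : (Y.filter fun p => (p.2 : ℤ) - (p.1 : ℤ) = (b : ℤ) - (a : ℤ)).card ≤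
        (Finset.Icc 1 (min a b - 1)).card := by
      apply Finset.card_le_card_of_injOn (fun p => min p.1 p.2)
      · rintro ⟨p1, p2⟩ hp
        simp only [Finset.mem_coe, Finset.mem_filter] at hp
        obtain ⟨hpY, hpd⟩ := hp
        obtain ⟨h1, h2⟩ := hY.1 _ hpY
        simp only [Finset.mem_coe, Finset.mem_Icc]
        refine ⟨by omega, ?_⟩
        by_contra hc
        exact hab (hY.2 _ hpY (a, b) ha hb (by omega) (by omega))
      · rintro ⟨p1, p2⟩ hp ⟨q1, q2⟩ hq hpq
        simp only [Finset.coe_filter, Set.mem_setOf_eq] at hp hq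
        simp only at hpq
        simp only [Prod.mk.injEq]
        omega
    unfold dk at hmin
    simp only [Nat.card_Icc] at key
    omega

lemma yd_ext {Y Z : Finset (ℕ × ℕ)} (hY : IsYD Y) (hZ : IsYD Z) (h : dk Y = dk Z) : Y = Z := by
  ext ⟨a, b⟩
  rw [mem_iff_dk hY, mem_iff_dk hZ, h]

lemma box_of_dk {Y : Finset (ℕ × ℕ)} (hY : IsYD Y) {a b : ℕ} {k : ℤ}
    (h1 : 1 ≤ a) (h2 : 1 ≤ b) (hk : (b : ℤ) - (a : ℤ) = k) (h : (min a b : ℤ) ≤ dk Y k) :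
    (a, b) ∈ Y := by
  rw [mem_iff_dk hY]
  exact ⟨h1, h2, by rw [hk]; exact h⟩

lemma dk_of_box {Y : Finset (ℕ × ℕ)} (hY : IsYD Y) {a b : ℕ} {k : ℤ}
    (hk : (b : ℤ) - (a : ℤ) = k) (h : (a, b) ∈ Y) : (min a b : ℤ) ≤ dk Y k := by
  rw [mem_iff_dk hY] at h
  rw [← hk]; exact h.2.2

/-- Adjacency relations for the diagonal sequence of a Young diagram. -/
lemma dk_adj {Y : Finset (ℕ × ℕ)} (hY : IsYD Y) (k : ℤ) :
    (k ≤ 0 → dk Y (k - 1) ≤ dk Y k ∧ dk Y k ≤ dk Y (k - 1) + 1) ∧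
    (1 ≤ k → dk Y k ≤ dk Y (k - 1) ∧ dk Y (k - 1) ≤ dk Y k + 1) := by
  have hnn := dk_nonneg Y
  constructor
  · intro hk
    constructor
    · -- d (k-1) ≤ d k
      rcases le_or_gt (dk Y (k - 1)) 0 with h | h
      · exact h.trans (hnn k)
      · set t := dk Y (k - 1) with ht
        have hB1 : ((t - k + 1).toNat, t.toNat) ∈ Y :=
          box_of_dk hY (k := k - 1) (by omega) (by omega) (by omega) (by omega)
        have hB2 : ((t - k).toNat, t.toNat) ∈ Y :=
          hY.2 _ hB1 _ (by omega) (by omega) (by omega) (by omega)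
        have := dk_of_box hY (k := k) (by omega) hB2
        omega
    · -- d k ≤ d (k-1) + 1
      rcases le_or_gt (dk Y k) 1 with h | h
      · have := hnn (k - 1); omega
      · set t := dk Y k with ht
        have hB1 : ((t - k).toNat, t.toNat) ∈ Y :=
          box_of_dk hY (k := k) (by omega) (by omega) (by omega) (by omega)
        have hB2 : ((t - k).toNat, (t - 1).toNat) ∈ Y :=
          hY.2 _ hB1 _ (by omega) (by omega) (by omega) (by omega)
        have := dk_of_box hY (k := k - 1) (by omega) hB2
        omega
  · intro hk
    constructor
    · -- d k ≤ d (k-1)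
      rcases le_or_gt (dk Y k) 0 with h | h
      · exact h.trans (hnn (k - 1))
      · set t := dk Y k with ht
        have hB1 : (t.toNat, (t + k).toNat) ∈ Y :=
          box_of_dk hY (k := k) (by omega) (by omega) (by omega) (by omega)
        have hB2 : (t.toNat, (t + k - 1).toNat) ∈ Y :=
          hY.2 _ hB1 _ (by omega) (by omega) (by omega) (by omega)
        have := dk_of_box hY (k := k - 1) (by omega) hB2
        omega
    · -- d (k-1) ≤ d k + 1
      rcases le_or_gt (dk Y (k - 1)) 1 with h | h
      · have := hnn k; omega
      · set t := dk Y (k - 1) with ht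
        have hB1 : (t.toNat, (t + k - 1).toNat) ∈ Y :=
          box_of_dk hY (k := k - 1) (by omega) (by omega) (by omega) (by omega)
        have hB2 : ((t - 1).toNat, (t + k - 1).toNat) ∈ Y :=
          hY.2 _ hB1 _ (by omega) (by omega) (by omega) (by omega)
        have := dk_of_box hY (k := k) (by omega) hB2
        omega

lemma mem_removeHook (Y : Finset (ℕ × ℕ)) (i j a b : ℕ) :
    (a, b) ∈ removeHook Y i j ↔
      ((a, b) ∈ Y ∧ ¬(a = i ∧ j ≤ b) ∧ ¬(b = j ∧ i ≤ a) ∧ ¬(i < a ∧ j < b)) ∨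
      ((a + 1, b + 1) ∈ Y ∧ i ≤ a ∧ j ≤ b) := by
  unfold removeHook hook
  simp only [Finset.mem_image, Finset.mem_sdiff, Finset.mem_filter, not_and, not_or]
  constructor
  · rintro ⟨⟨p1, p2⟩, ⟨hpY, hpH⟩, hps⟩
    have hH := hpH hpY
    unfold shiftBox at hps
    split_ifs at hps with hc
    · simp only [Prod.mk.injEq] at hps
      right
      have hp1 : p1 = a + 1 := by omega
      have hp2 : p2 = b + 1 := by omega
      rw [hp1, hp2] at hpY
      exact ⟨hpY, by omega, by omega⟩
    · simp only [Prod.mk.injEq] at hps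
      left
      obtain ⟨rfl, rfl⟩ := hps
      exact ⟨hpY, by tauto, by tauto, by tauto⟩
  · rintro (⟨h1, h2, h3, h4⟩ | ⟨h1, h2, h3⟩)
    · refine ⟨(a, b), ⟨h1, fun _ => ⟨by tauto, by tauto⟩⟩, ?_⟩
      unfold shiftBox
      rw [if_neg (by dsimp only; omega)]
    · refine ⟨(a + 1, b + 1), ⟨h1, fun _ => ⟨by omega, by omega⟩⟩, ?_⟩
      unfold shiftBox
      rw [if_pos (show i < (a + 1, b + 1).1 ∧ j < (a + 1, b + 1).2 by dsimp only; omega)]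
      simp

lemma isYD_removeHook {Y : Finset (ℕ × ℕ)} (hY : IsYD Y) {i j : ℕ} (hij : (i, j) ∈ Y) :
    IsYD (removeHook Y i j) := by
  have hi1 : 1 ≤ i := (hY.1 _ hij).1
  have hj1 : 1 ≤ j := (hY.1 _ hij).2
  constructor
  · rintro ⟨a, b⟩ h
    rw [mem_removeHook] at h
    rcases h with ⟨h, -⟩ | ⟨-, h2, h3⟩
    · exact hY.1 _ h
    · exact ⟨by omega, by omega⟩
  · rintro ⟨a, b⟩ h ⟨c, d⟩ hc1 hd1 hca hdb
    simp only at hca hdb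
    rw [mem_removeHook] at h ⊢
    rcases h with ⟨h1, h2, h3, h4⟩ | ⟨h1, h2, h3⟩
    · left
      exact ⟨hY.2 _ h1 (c, d) hc1 hd1 hca hdb, by omega, by omega, by omega⟩
    · by_cases hcd : i ≤ c ∧ j ≤ d
      · right
        exact ⟨hY.2 _ h1 (c + 1, d + 1) (by omega) (by omega) (by omega) (by omega),
          hcd.1, hcd.2⟩
      · left
        exact ⟨hY.2 _ h1 (c, d) hc1 hd1 (by omega) (by omega), by omega, by omega, by omega⟩

lemma col_end {Y : Finset (ℕ × ℕ)} (hY : IsYD Y) {i j : ℕ} (h : (i, j) ∈ Y) :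
    ∃ i', (i', j) ∈ Y ∧ (i' + 1, j) ∉ Y := by
  classical
  set C := (Y.filter fun p => p.2 = j).image Prod.fst with hC
  have hne : C.Nonempty := ⟨i, Finset.mem_image.2 ⟨(i, j), Finset.mem_filter.2 ⟨h, rfl⟩, rfl⟩⟩
  refine ⟨C.max' hne, ?_, ?_⟩
  · obtain ⟨⟨p1, p2⟩, hp, hp1⟩ := Finset.mem_image.1 (C.max'_mem hne)
    rw [Finset.mem_filter] at hp
    simp only at hp1
    have hpj : p2 = j := hp.2
    have h2 := hp.1
    rw [hp1, hpj] at h2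
    exact h2
  · intro hmem
    have hle := C.le_max' (C.max' hne + 1)
      (Finset.mem_image.2 ⟨(C.max' hne + 1, j), Finset.mem_filter.2 ⟨hmem, rfl⟩, rfl⟩)
    omega

lemma row_end {Y : Finset (ℕ × ℕ)} (hY : IsYD Y) {i j : ℕ} (h : (i, j) ∈ Y) :
    ∃ j', (i, j') ∈ Y ∧ (i, j' + 1) ∉ Y := by
  classical
  set C := (Y.filter fun p => p.1 = i).image Prod.snd with hC
  have hne : C.Nonempty := ⟨j, Finset.mem_image.2 ⟨(i, j), Finset.mem_filter.2 ⟨h, rfl⟩, rfl⟩⟩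
  refine ⟨C.max' hne, ?_, ?_⟩
  · obtain ⟨⟨p1, p2⟩, hp, hp2⟩ := Finset.mem_image.1 (C.max'_mem hne)
    rw [Finset.mem_filter] at hp
    simp only at hp2
    have hpi : p1 = i := hp.2
    have h2 := hp.1
    rw [hp2, hpi] at h2
    exact h2
  · intro hmem
    have hle := C.le_max' (C.max' hne + 1)
      (Finset.mem_image.2 ⟨(i, C.max' hne + 1), Finset.mem_filter.2 ⟨hmem, rfl⟩, rfl⟩)
    omega

lemma cut_inj {a : ℤ → ℤ} {l r l0 r0 : ℤ} (h : ∀ k, cut a l r k = cut a l0 r0 k)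
    (h1 : l ≤ r) (h2 : l0 ≤ r0) : l = l0 ∧ r = r0 := by
  constructor
  · rcases lt_trichotomy l l0 with hc | hc | hc
    · have := h l; unfold cut at this; split_ifs at this <;> omega
    · exact hc
    · have := h l0; unfold cut at this; split_ifs at this <;> omega
  · rcases lt_trichotomy r r0 with hc | hc | hc
    · have := h r0; unfold cut at this; split_ifs at this <;> omega
    · exact hc
    · have := h r; unfold cut at this; split_ifs at this <;> omega

lemma dk_removeHook {Y : Finset (ℕ × ℕ)} (hY : IsYD Y) {i j i' j' : ℕ}
    (hij : (i, j) ∈ Y) (h1 : (i', j) ∈ Y) (h2 : (i' + 1, j) ∉ Y)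
    (h3 : (i, j') ∈ Y) (h4 : (i, j' + 1) ∉ Y) :
    dk (removeHook Y i j) = cut (dk Y) ((j : ℤ) - (i' : ℤ)) ((j' : ℤ) - (i : ℤ)) := by
  have hi1 : 1 ≤ i := (hY.1 _ hij).1
  have hj1 : 1 ≤ j := (hY.1 _ hij).2
  have hi'1 : 1 ≤ i' := (hY.1 _ h1).1
  have hj'1 : 1 ≤ j' := (hY.1 _ h3).2
  have hrow : ∀ t : ℕ, (i, t) ∈ Y ↔ 1 ≤ t ∧ t ≤ j' := by
    intro t
    constructor
    · intro ht
      refine ⟨(hY.1 _ ht).2, ?_⟩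
      by_contra hc
      exact h4 (hY.2 _ ht (i, j' + 1) hi1 (by omega) le_rfl (by omega))
    · intro ⟨ht1, ht2⟩
      exact hY.2 _ h3 (i, t) hi1 ht1 le_rfl ht2
  have hcol : ∀ t : ℕ, (t, j) ∈ Y ↔ 1 ≤ t ∧ t ≤ i' := by
    intro t
    constructor
    · intro ht
      refine ⟨(hY.1 _ ht).1, ?_⟩
      by_contra hc
      exact h2 (hY.2 _ ht (i' + 1, j) (by omega) hj1 (by omega) le_rfl)
    · intro ⟨ht1, ht2⟩
      exact hY.2 _ h1 (t, j) ht1 hj1 ht2 le_rfl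
  have hii' : i ≤ i' := ((hcol i).1 hij).2
  have hjj' : j ≤ j' := ((hrow j).1 hij).2
  funext k
  have hinj : Set.InjOn (shiftBox i j) ((Y \ hook Y i j) : Finset (ℕ × ℕ)) := by
    rintro ⟨p1, p2⟩ hp ⟨q1, q2⟩ hq hpq
    simp only [Finset.coe_sdiff, Set.mem_diff, Finset.mem_coe] at hp hq
    have hpH : ¬(p1 = i ∧ j ≤ p2) ∧ ¬(p2 = j ∧ i ≤ p1) := by
      have hh := hp.2
      unfold hook at hh
      rw [Finset.mem_filter] at hh
      exact ⟨fun hc => hh ⟨hp.1, Or.inl hc⟩, fun hc => hh ⟨hp.1, Or.inr hc⟩⟩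
    have hqH : ¬(q1 = i ∧ j ≤ q2) ∧ ¬(q2 = j ∧ i ≤ q1) := by
      have hh := hq.2
      unfold hook at hh
      rw [Finset.mem_filter] at hh
      exact ⟨fun hc => hh ⟨hq.1, Or.inl hc⟩, fun hc => hh ⟨hq.1, Or.inr hc⟩⟩
    unfold shiftBox at hpq
    obtain ⟨hpH1, hpH2⟩ := hpH
    obtain ⟨hqH1, hqH2⟩ := hqH
    split_ifs at hpq with hc1 hc2 hc2 <;>
      simp only [Prod.mk.injEq] at hpq ⊢ <;> omega
  have hZk : ((removeHook Y i j).filter fun p => (p.2 : ℤ) - (p.1 : ℤ) = k).card =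
      ((Y \ hook Y i j).filter fun p => (p.2 : ℤ) - (p.1 : ℤ) = k).card := by
    unfold removeHook
    rw [Finset.filter_image]
    rw [Finset.card_image_of_injOn (hinj.mono (by
      intro p hp
      simp only [Finset.coe_filter, Set.mem_setOf_eq, Finset.mem_coe] at hp ⊢
      exact hp.1))]
    congr 1
    apply Finset.filter_congr
    rintro ⟨p1, p2⟩ hp
    rw [Finset.mem_sdiff] at hp
    have hp1 : 1 ≤ p1 := (hY.1 _ hp.1).1
    have hp2 : 1 ≤ p2 := (hY.1 _ hp.1).2
    unfold shiftBox
    split_ifs with hc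
    · simp only [Prod.mk.injEq]
      constructor <;> intro <;> omega
    · exact Iff.rfl
  have hsub : ((hook Y i j).filter fun p => (p.2 : ℤ) - (p.1 : ℤ) = k) ⊆
      (Y.filter fun p => (p.2 : ℤ) - (p.1 : ℤ) = k) :=
    Finset.filter_subset_filter _ (Finset.filter_subset _ Y)
  have hsplit : ((Y \ hook Y i j).filter fun p => (p.2 : ℤ) - (p.1 : ℤ) = k).card =
      (Y.filter fun p => (p.2 : ℤ) - (p.1 : ℤ) = k).card -
      ((hook Y i j).filter fun p => (p.2 : ℤ) - (p.1 : ℤ) = k).card := by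
    rw [show ((Y \ hook Y i j).filter fun p => (p.2 : ℤ) - (p.1 : ℤ) = k) =
        (Y.filter fun p => (p.2 : ℤ) - (p.1 : ℤ) = k) \
        ((hook Y i j).filter fun p => (p.2 : ℤ) - (p.1 : ℤ) = k) from by
      ext p
      simp only [Finset.mem_sdiff, Finset.mem_filter]
      tauto]
    rw [Finset.card_sdiff, Finset.inter_eq_left.mpr hsub]
  have hHP : ((hook Y i j).filter fun p => (p.2 : ℤ) - (p.1 : ℤ) = k).card =
      if (j : ℤ) - (i' : ℤ) ≤ k ∧ k ≤ (j' : ℤ) - (i : ℤ) then 1 else 0 := by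
    have hmemHP : ∀ p1 p2 : ℕ,
        ((p1, p2) ∈ (hook Y i j).filter fun p => (p.2 : ℤ) - (p.1 : ℤ) = k) ↔
        ((p1, p2) ∈ Y ∧ ((p1 = i ∧ j ≤ p2) ∨ (p2 = j ∧ i ≤ p1)) ∧ (p2 : ℤ) - (p1 : ℤ) = k) := by
      intro p1 p2
      rw [Finset.mem_filter]
      unfold hook
      rw [Finset.mem_filter]
      exact ⟨fun ⟨⟨h1, h2⟩, h3⟩ => ⟨h1, h2, h3⟩, fun ⟨h1, h2, h3⟩ => ⟨⟨h1, h2⟩, h3⟩⟩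
    split_ifs with hk
    · rw [Finset.card_eq_one]
      by_cases hif : (j : ℤ) - (i : ℤ) ≤ k
      · refine ⟨(i, ((i : ℤ) + k).toNat), ?_⟩
        rw [Finset.eq_singleton_iff_unique_mem]
        constructor
        · rw [hmemHP]
          exact ⟨(hrow _).2 ⟨by omega, by omega⟩, Or.inl ⟨rfl, by omega⟩, by omega⟩
        · rintro ⟨p1, p2⟩ hp
          rw [hmemHP] at hp
          obtain ⟨hpY, hcond, hd⟩ := hp
          rcases hcond with ⟨e1, e2⟩ | ⟨e1, e2⟩
          · have hb : p2 ≤ j' := ((hrow p2).1 (by rw [← e1]; exact hpY)).2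
            simp only [Prod.mk.injEq]
            omega
          · have hb : p1 ≤ i' := ((hcol p1).1 (by rw [← e1]; exact hpY)).2
            simp only [Prod.mk.injEq]
            omega
      · refine ⟨(((j : ℤ) - k).toNat, j), ?_⟩
        rw [Finset.eq_singleton_iff_unique_mem]
        constructor
        · rw [hmemHP]
          exact ⟨(hcol _).2 ⟨by omega, by omega⟩, Or.inr ⟨rfl, by omega⟩, by omega⟩
        · rintro ⟨p1, p2⟩ hp
          rw [hmemHP] at hp
          obtain ⟨hpY, hcond, hd⟩ := hp
          rcases hcond with ⟨e1, e2⟩ | ⟨e1, e2⟩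
          · have hb : p2 ≤ j' := ((hrow p2).1 (by rw [← e1]; exact hpY)).2
            simp only [Prod.mk.injEq]
            omega
          · have hb : p1 ≤ i' := ((hcol p1).1 (by rw [← e1]; exact hpY)).2
            simp only [Prod.mk.injEq]
            omega
    · rw [Finset.card_eq_zero, Finset.eq_empty_iff_forall_notMem]
      rintro ⟨p1, p2⟩ hp
      rw [hmemHP] at hp
      obtain ⟨hpY, hcond, hd⟩ := hp
      rcases hcond with ⟨e1, e2⟩ | ⟨e1, e2⟩
      · have hb : p2 ≤ j' := ((hrow p2).1 (by rw [← e1]; exact hpY)).2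
        omega
      · have hb : p1 ≤ i' := ((hcol p1).1 (by rw [← e1]; exact hpY)).2
        omega
  have hle : ((hook Y i j).filter fun p => (p.2 : ℤ) - (p.1 : ℤ) = k).card ≤
      (Y.filter fun p => (p.2 : ℤ) - (p.1 : ℤ) = k).card := Finset.card_le_card hsub
  rw [hHP] at hle
  show (((removeHook Y i j).filter fun p => (p.2 : ℤ) - (p.1 : ℤ) = k).card : ℤ) = _
  unfold cut
  rw [hZk, hsplit, hHP]
  unfold dk
  split_ifs at hle ⊢ with hk <;> omega

theorem stmt3 (m n : ℕ) (hm : 1 ≤ m) (hn : 1 ≤ n)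
    (Y Y' : Finset (ℕ × ℕ)) (hY : IsYD Y) (hYsub : Y ⊆ rect m n)
    (hY' : IsYD Y') (hY'sub : Y' ⊆ rect m n) :
    ((∃ i j : ℕ, (i, j) ∈ Y ∧ Y' = removeHook Y i j) ↔
      (∃ l r : ℤ, -(m : ℤ) < l ∧ l ≤ r ∧ r < (n : ℤ) ∧ dk Y' = cut (dk Y) l r)) ∧
    (∀ i j : ℕ, (i, j) ∈ Y → Y' = removeHook Y i j →
      ∀ l r : ℤ, -(m : ℤ) < l → l ≤ r → r < (n : ℤ) → dk Y' = cut (dk Y) l r →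
      ∀ i' j' : ℕ, (i', j) ∈ Y → (i' + 1, j) ∉ Y → (i, j') ∈ Y → (i, j' + 1) ∉ Y →
        l = (j : ℤ) - (i' : ℤ) ∧ r = (j' : ℤ) - (i : ℤ)) := by
  constructor
  · constructor
    · rintro ⟨i, j, hij, rfl⟩
      obtain ⟨i', hi'Y, hi'n⟩ := col_end hY hij
      obtain ⟨j', hj'Y, hj'n⟩ := row_end hY hij
      have hi1 : 1 ≤ i := (hY.1 _ hij).1
      have hj1 : 1 ≤ j := (hY.1 _ hij).2
      have hii' : i ≤ i' := by
        by_contra hc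
        exact hi'n (hY.2 _ hij (i' + 1, j) (by omega) (by omega) (by omega) le_rfl)
      have hjj' : j ≤ j' := by
        by_contra hc
        exact hj'n (hY.2 _ hij (i, j' + 1) (by omega) (by omega) le_rfl (by omega))
      have hi'm : i' ≤ m := by
        have hh := hYsub hi'Y
        unfold rect at hh
        rw [Finset.mem_product] at hh
        simp only [Finset.mem_Icc] at hh
        exact hh.1.2
      have hj'm : j' ≤ n := by
        have hh := hYsub hj'Y
        unfold rect at hh
        rw [Finset.mem_product] at hh
        simp only [Finset.mem_Icc] at hh
        exact hh.2.2
      exact ⟨(j : ℤ) - i', (j' : ℤ) - i, by omega, by omega, by omega,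
        dk_removeHook hY hij hi'Y hi'n hj'Y hj'n⟩
    · rintro ⟨l, r, hml, hlr, hrn, hdk⟩
      have hcut : ∀ k, dk Y' k = cut (dk Y) l r k := fun k => congrFun hdk k
      have hnnY := dk_nonneg Y
      have hnnY' := dk_nonneg Y'
      have hdl : 1 ≤ dk Y l := by
        have h1 := hcut l
        unfold cut at h1
        rw [if_pos ⟨le_refl l, hlr⟩] at h1
        have := hnnY' l
        omega
      have hdr : 1 ≤ dk Y r := by
        have h1 := hcut r
        unfold cut at h1
        rw [if_pos ⟨hlr, le_refl r⟩] at h1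
        have := hnnY' r
        omega
      set dl := dk Y l with hdl_def
      set dr := dk Y r with hdr_def
      have hA : ((dl - min l 0).toNat, (dl + max l 0).toNat) ∈ Y :=
        box_of_dk hY (k := l) (by omega) (by omega) (by omega) (by omega)
      have hB : ((dr - min r 0).toNat, (dr + max r 0).toNat) ∈ Y :=
        box_of_dk hY (k := r) (by omega) (by omega) (by omega) (by omega)
      have hnotA : ((dl - min l 0).toNat + 1, (dl + max l 0).toNat) ∉ Y := by
        intro hmem
        have hcontra := dk_of_box hY (k := l - 1) (by omega) hmem
        have e1 := hcut (l - 1)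
        unfold cut at e1
        rw [if_neg (by omega)] at e1
        have e2 := hcut l
        unfold cut at e2
        rw [if_pos ⟨le_refl l, hlr⟩] at e2
        rcases le_or_gt l 0 with hl0 | hl0
        · have := ((dk_adj hY' l).1 hl0).1
          omega
        · have := ((dk_adj hY' l).2 hl0).2
          omega
      have hnotB : ((dr - min r 0).toNat, (dr + max r 0).toNat + 1) ∉ Y := by
        intro hmem
        have hcontra := dk_of_box hY (k := r + 1) (by omega) hmem
        have e1 := hcut (r + 1)
        unfold cut at e1
        rw [if_neg (by omega)] at e1
        have e2 := hcut r
        unfold cut at e2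
        rw [if_pos ⟨hlr, le_refl r⟩] at e2
        rcases le_or_gt (r + 1) 0 with hr0 | hr0
        · have hadj := ((dk_adj hY' (r + 1)).1 hr0).2
          rw [show r + 1 - 1 = r from by ring] at hadj
          omega
        · have hadj := ((dk_adj hY' (r + 1)).2 hr0).1
          rw [show r + 1 - 1 = r from by ring] at hadj
          omega
      have hC : ((dr - min r 0).toNat, (dl + max l 0).toNat) ∈ Y := by
        rcases le_or_gt (dl + max l 0) (dr + max r 0) with hc | hc
        · exact hY.2 _ hB _ (by omega) (by omega) (by omega) (by omega)
        · have hc2 : dr - min r 0 ≤ dl - min l 0 := by omega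
          exact hY.2 _ hA _ (by omega) (by omega) (by omega) (by omega)
      refine ⟨(dr - min r 0).toNat, (dl + max l 0).toNat, hC, ?_⟩
      have hmain := dk_removeHook hY hC hA hnotA hB hnotB
      have el : (((dl + max l 0).toNat : ℕ) : ℤ) - (((dl - min l 0).toNat : ℕ) : ℤ) = l := by
        omega
      have er : (((dr + max r 0).toNat : ℕ) : ℤ) - (((dr - min r 0).toNat : ℕ) : ℤ) = r := by
        omega
      rw [el, er] at hmain
      apply yd_ext hY' (isYD_removeHook hY hC)
      rw [hdk, hmain]
  · intro i j hij hY'eq l r hml hlr hrn hdkeq i' j' hb1 hb2 hb3 hb4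
    have hmain := dk_removeHook hY hij hb1 hb2 hb3 hb4
    rw [← hY'eq] at hmain
    have hi1 : 1 ≤ i := (hY.1 _ hij).1
    have hj1 : 1 ≤ j := (hY.1 _ hij).2
    have hii' : i ≤ i' := by
      by_contra hc
      exact hb2 (hY.2 _ hij (i' + 1, j) (by omega) (by omega) (by omega) le_rfl)
    have hjj' : j ≤ j' := by
      by_contra hc
      exact hb4 (hY.2 _ hij (i, j' + 1) (by omega) (by omega) le_rfl (by omega))
    exact cut_inj (fun k => (congrFun hdkeq k).symm.trans (congrFun hmain k)) hlr (by omega)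
end

section
/- Let m ≤ n with m+n even and c = (n−m)/2. For all l, r ∈ ℤ and every sequence a ∈ ℕ₀^{m+n+1}, one has E(a_{[l,r]}) = E(a)_{[e_l(l), e_r(r)]}. Consequently, for every Young diagram Y contained in Y_{m,n} and all −m < l ≤ r < n, d(Y)_{[l,r]} ∈ D_{m,n} if and only if d(E(Y))_{[e_l(l), e_r(r)]} ∈ D_{m,n+1}. -/
open Finset

set_option maxHeartbeats 1000000 in
lemma emap_cut (c : ℤ) (a : ℤ → ℤ) (l r : ℤ) :
    Emap c (cut a l r) = cut (Emap c a) (el c l) (er c r) := by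
  funext k
  simp only [Emap, cut, el, er]
  split_ifs <;> omega

lemma emap_dseq (m n : ℕ) (hmn : m ≤ n) (c : ℤ) (hc : 2 * c = (n : ℤ) - (m : ℤ))
    (b : ℤ → ℤ) : Dseq m n b ↔ Dseq m (n + 1) (Emap c b) := by
  have hc0 : 0 ≤ c := by omega
  have hcn : c ≤ (n : ℤ) := by omega
  have hle : ∀ k : ℤ, k ≤ c → Emap c b k = b k := fun k hk => if_pos hk
  have hgt : ∀ k : ℤ, c < k → Emap c b k = b (k - 1) := fun k hk => if_neg (not_le.mpr hk)
  constructor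
  · rintro ⟨h0, hneg, hpos, hL, hR⟩
    refine ⟨?_, ?_, ?_, ?_, ?_⟩
    · intro k
      rcases le_or_gt k c with h | h
      · rw [hle k h]; exact h0 k
      · rw [hgt k h]; exact h0 _
    · intro k hk
      rw [hle k (by omega)]; exact hneg k hk
    · intro k hk
      rw [hgt k (by push_cast at hk ⊢; omega)]
      exact hpos (k - 1) (by push_cast at hk ⊢; omega)
    · intro i h1 h2
      rw [hle i (by omega), hle (i - 1) (by omega)]
      exact hL i h1 h2
    · intro i h1 h2
      push_cast at h2
      rcases lt_trichotomy i (c + 1) with h | h | h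
      · rw [hle i (by omega), hle (i - 1) (by omega)]
        exact hR i h1 (by push_cast; omega)
      · rw [hgt i (by omega), hle (i - 1) (by omega), show i - 1 = c by omega]
        omega
      · rw [hgt i (by omega), hgt (i - 1) (by omega)]
        have := hR (i - 1) (by omega) (by push_cast; omega)
        rw [show i - 1 - 1 = i - 2 by ring] at this
        rw [show i - 1 - 1 = i - 2 by ring]
        exact this
  · rintro ⟨h0, hneg, hpos, hL, hR⟩
    refine ⟨?_, ?_, ?_, ?_, ?_⟩
    · intro k
      rcases le_or_gt k c with h | h
      · have := h0 k; rwa [hle k h] at this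
      · have := h0 (k + 1); rw [hgt (k + 1) (by omega)] at this
        simpa using this
    · intro k hk
      have := hneg k hk; rwa [hle k (by omega)] at this
    · intro k hk
      have := hpos (k + 1) (by push_cast; omega)
      rw [hgt (k + 1) (by omega)] at this
      simpa using this
    · intro i h1 h2
      have := hL i h1 h2
      rwa [hle i (by omega), hle (i - 1) (by omega)] at this
    · intro i h1 h2
      rcases le_or_gt i c with h | h
      · have := hR i h1 (by push_cast; omega)
        rwa [hle i h, hle (i - 1) (by omega)] at this
      · have := hR (i + 1) (by omega) (by push_cast; omega)
        rw [hgt (i + 1) (by omega), show i + 1 - 1 = i by ring, hgt i h] at this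
        simpa using this

theorem stmt8 (m n : ℕ) (hm : 1 ≤ m) (hmn : m ≤ n) (heven : Even (m + n))
    (c : ℤ) (hc : 2 * c = (n : ℤ) - (m : ℤ)) :
    (∀ a : ℤ → ℤ, (∀ k, 0 ≤ a k) →
      ∀ l r : ℤ, Emap c (cut a l r) = cut (Emap c a) (el c l) (er c r)) ∧
    (∀ Y : Finset (ℕ × ℕ), IsYD Y → Y ⊆ rect m n →
      ∀ l r : ℤ, -(m : ℤ) < l → l ≤ r → r < (n : ℤ) →
        (Dseq m n (cut (dk Y) l r) ↔
          Dseq m (n + 1) (cut (Emap c (dk Y)) (el c l) (er c r)))) := by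
  constructor
  · intro a _ l r
    exact emap_cut c a l r
  · intro Y _ _ l r _ _ _
    rw [← emap_cut]
    exact emap_dseq m n hmn c hc _
end

section
/- Let m ≤ n with m+n even and c = (n−m)/2. Then every position Y ∈ T(Y_{m,n+1}) of MHRG(m,n+1) satisfies d_c(Y) = d_{c+1}(Y). -/
open Finset

namespace MH9


/-- generic: a downward-closed (within `[s,∞)`) finset of `ℤ` is an interval -/
lemma icc_struct (I : Finset ℤ) (s : ℤ) (h1 : ∀ x ∈ I, s ≤ x)
    (h2 : ∀ x ∈ I, ∀ y, s ≤ y → y ≤ x → y ∈ I) :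
    I = Finset.Icc s (s + I.card - 1) := by
  ext x
  simp only [Finset.mem_Icc]
  constructor
  · intro hx
    refine ⟨h1 x hx, ?_⟩
    have hsub : Finset.Icc s x ⊆ I := by
      intro y hy
      rw [Finset.mem_Icc] at hy
      exact h2 x hx y hy.1 hy.2
    have := Finset.card_le_card hsub
    rw [Int.card_Icc] at this
    omega
  · rintro ⟨hs, hx⟩
    by_contra hxI
    have hsub : I ⊆ Finset.Icc s (x - 1) := by
      intro y hy
      rw [Finset.mem_Icc]
      refine ⟨h1 y hy, ?_⟩
      by_contra hyx
      exact hxI (h2 y hy x hs (by omega))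
    have := Finset.card_le_card hsub
    rw [Int.card_Icc] at this
    omega

def diagI (Y : Finset (ℕ × ℕ)) (k : ℤ) : Finset ℤ :=
  (Y.filter fun p => (p.2 : ℤ) - (p.1 : ℤ) = k).image fun p => (p.1 : ℤ)

lemma mem_diagI {Y : Finset (ℕ × ℕ)} {k x : ℤ} :
    x ∈ diagI Y k ↔ ∃ p ∈ Y, (p.1 : ℤ) = x ∧ (p.2 : ℤ) = x + k := by
  simp only [diagI, Finset.mem_image, Finset.mem_filter]
  constructor
  · rintro ⟨p, ⟨hp, hd⟩, rfl⟩; exact ⟨p, hp, rfl, by omega⟩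
  · rintro ⟨p, hp, h1, h2⟩; exact ⟨p, ⟨hp, by omega⟩, h1⟩

lemma dk_eq_card_diagI (Y : Finset (ℕ × ℕ)) (k : ℤ) :
    dk Y k = ((diagI Y k).card : ℤ) := by
  unfold dk diagI
  congr 1
  rw [Finset.card_image_of_injOn]
  intro p hp q hq h
  simp only [Finset.coe_filter, Set.mem_setOf_eq] at hp hq
  have h1 : (p.1 : ℤ) = (q.1 : ℤ) := h
  have hd1 := hp.2; have hd2 := hq.2
  have h2 : (p.2 : ℤ) = (q.2 : ℤ) := by omega
  exact Prod.ext (by exact_mod_cast h1) (by exact_mod_cast h2)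

def skk (k : ℤ) : ℤ := max 1 (1 - k)

def tkk (Y : Finset (ℕ × ℕ)) (k : ℤ) : ℤ := skk k + dk Y k - 1

lemma dk_nonneg (Y : Finset (ℕ × ℕ)) (k : ℤ) : 0 ≤ dk Y k := by
  unfold dk; positivity

lemma diagI_eq_Icc {Y : Finset (ℕ × ℕ)} (hY : IsYD Y) (k : ℤ) :
    diagI Y k = Finset.Icc (skk k) (tkk Y k) := by
  have h := icc_struct (diagI Y k) (skk k) ?_ ?_
  · rw [h, tkk, dk_eq_card_diagI]
  · intro x hx
    rw [mem_diagI] at hx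
    obtain ⟨p, hp, h1, h2⟩ := hx
    have := hY.1 p hp
    unfold skk; omega
  · intro x hx y hsy hyx
    rw [mem_diagI] at hx ⊢
    obtain ⟨p, hp, h1, h2⟩ := hx
    have hco := hY.1 p hp
    have hy1 : 1 ≤ y := le_trans (le_max_left _ _) hsy
    have hyk : 1 ≤ y + k := by unfold skk at hsy; omega
    refine ⟨(y.toNat, (y + k).toNat), ?_, by omega, by omega⟩
    exact hY.2 p hp _ (by omega) (by omega) (by omega) (by omega)

lemma mem_diag_iff {Y : Finset (ℕ × ℕ)} (hY : IsYD Y) {k x : ℤ} :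
    x ∈ diagI Y k ↔ skk k ≤ x ∧ x ≤ tkk Y k := by
  rw [diagI_eq_Icc hY, Finset.mem_Icc]

lemma moveL {Y : Finset (ℕ × ℕ)} (hY : IsYD Y) {k x : ℤ}
    (hx : x ∈ diagI Y k) (h2 : 2 ≤ x + k) : x ∈ diagI Y (k - 1) := by
  rw [mem_diagI] at hx ⊢
  obtain ⟨p, hp, h1, hpk⟩ := hx
  have hco := hY.1 p hp
  refine ⟨(p.1, p.2 - 1), hY.2 p hp _ (by omega) (by omega) le_rfl (by omega), by omega, ?_⟩
  push_cast [Nat.cast_sub (show 1 ≤ p.2 by omega)]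
  omega

lemma moveU {Y : Finset (ℕ × ℕ)} (hY : IsYD Y) {k x : ℤ}
    (hx : x ∈ diagI Y k) (h2 : 2 ≤ x) : x - 1 ∈ diagI Y (k + 1) := by
  rw [mem_diagI] at hx ⊢
  obtain ⟨p, hp, h1, hpk⟩ := hx
  have hco := hY.1 p hp
  refine ⟨(p.1 - 1, p.2), hY.2 p hp _ (by omega) (by omega) (by omega) le_rfl, ?_, ?_⟩
  · push_cast [Nat.cast_sub (show 1 ≤ p.1 by omega)]; omega
  · omega

lemma tkk_mem {Y : Finset (ℕ × ℕ)} (hY : IsYD Y) {k : ℤ} (h : 1 ≤ dk Y k) :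
    tkk Y k ∈ diagI Y k := by
  rw [mem_diag_iff hY]; unfold tkk; omega

lemma adj_le {Y : Finset (ℕ × ℕ)} (hY : IsYD Y) {k : ℤ} (hk : k ≤ 0) :
    dk Y (k - 1) ≤ dk Y k ∧ dk Y k ≤ dk Y (k - 1) + 1 := by
  constructor
  · rcases le_or_gt (dk Y (k-1)) 0 with h | h
    · have := dk_nonneg Y k; omega
    · have hm := tkk_mem hY (k := k - 1) (by omega)
      have h2 : 2 ≤ tkk Y (k - 1) := by unfold tkk skk; omega
      have := moveU hY hm h2
      rw [mem_diag_iff hY] at this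
      have h3 := this.2
      unfold tkk skk at h3
      simp only [sub_add_cancel] at h3
      omega
  · rcases le_or_gt (dk Y k) 1 with h | h
    · have := dk_nonneg Y (k-1); omega
    · have hm := tkk_mem hY (k := k) (by omega)
      have h2 : 2 ≤ tkk Y k + k := by unfold tkk skk; omega
      have := moveL hY hm h2
      rw [mem_diag_iff hY] at this
      have h3 := this.2
      unfold tkk skk at h3
      omega

lemma adj_ge {Y : Finset (ℕ × ℕ)} (hY : IsYD Y) {k : ℤ} (hk : 1 ≤ k) :
    dk Y k ≤ dk Y (k - 1) ∧ dk Y (k - 1) ≤ dk Y k + 1 := by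
  constructor
  · rcases le_or_gt (dk Y k) 0 with h | h
    · have := dk_nonneg Y (k-1); omega
    · have hm := tkk_mem hY (k := k) (by omega)
      have h2 : 2 ≤ tkk Y k + k := by unfold tkk skk; omega
      have := moveL hY hm h2
      rw [mem_diag_iff hY] at this
      have h3 := this.2
      unfold tkk skk at h3
      omega
  · rcases le_or_gt (dk Y (k - 1)) 1 with h | h
    · have := dk_nonneg Y k; omega
    · have hm := tkk_mem hY (k := k - 1) (by omega)
      have h2 : 2 ≤ tkk Y (k - 1) := by unfold tkk skk; omega
      have := moveU hY hm h2
      rw [mem_diag_iff hY] at this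
      have h3 := this.2
      unfold tkk skk at h3
      simp only [sub_add_cancel] at h3
      omega

/-- boundary bit of the diagram at gap `x` -/
def bitz (Y : Finset (ℕ × ℕ)) (x : ℤ) : ℤ :=
  dk Y x - dk Y (x - 1) + (if 1 ≤ x then 1 else 0)

lemma bitz01 {Y : Finset (ℕ × ℕ)} (hY : IsYD Y) (x : ℤ) :
    bitz Y x = 0 ∨ bitz Y x = 1 := by
  unfold bitz
  rcases le_or_gt x 0 with h | h
  · have := adj_le hY h; rw [if_neg (by omega)]; omega
  · have := adj_ge hY h; rw [if_pos (by omega)]; omega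

lemma mono_neg {Y : Finset (ℕ × ℕ)} (hY : IsYD Y) {k k' : ℤ} (h : k ≤ k') (h0 : k' ≤ 0) :
    dk Y k ≤ dk Y k' := by
  have hd : ∀ d : ℕ, ∀ k' : ℤ, k' ≤ 0 → dk Y (k' - d) ≤ dk Y k' := by
    intro d
    induction d with
    | zero => intro k' _; simp
    | succ d ih =>
      intro k' hk'
      have h1 := (adj_le hY (k := k' - d) (by omega)).1
      calc dk Y (k' - (d+1)) = dk Y ((k' - d) - 1) := by ring_nf
        _ ≤ dk Y (k' - d) := by rw [show ((k':ℤ) - d - 1) = (k' - d) - 1 by ring] at h1 ⊢; exact h1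
        _ ≤ dk Y k' := ih k' hk'
  have := hd (k' - k).toNat k' h0
  rwa [show k' - ((k' - k).toNat : ℤ) = k by omega] at this

lemma mono_pos {Y : Finset (ℕ × ℕ)} (hY : IsYD Y) {k k' : ℤ} (h : k ≤ k') (h0 : 1 ≤ k) :
    dk Y k' ≤ dk Y k := by
  have hd : ∀ d : ℕ, ∀ k : ℤ, 1 ≤ k → dk Y (k + d) ≤ dk Y k := by
    intro d
    induction d with
    | zero => intro k _; simp
    | succ d ih =>
      intro k hk
      have h1 := (adj_ge hY (k := k + d + 1) (by omega)).1
      calc dk Y (k + (d+1)) = dk Y (k + d + 1) := by ring_nf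
        _ ≤ dk Y (k + d + 1 - 1) := h1
        _ = dk Y (k + d) := by ring_nf
        _ ≤ dk Y k := ih k hk
  have := hd (k' - k).toNat k h0
  rwa [show k + ((k' - k).toNat : ℤ) = k' by omega] at this

lemma tkk_mono {Y : Finset (ℕ × ℕ)} (hY : IsYD Y) {k k' : ℤ} (h : k ≤ k') :
    tkk Y k' ≤ tkk Y k := by
  have hd : ∀ d : ℕ, ∀ k : ℤ, tkk Y (k + d) ≤ tkk Y k := by
    intro d
    induction d with
    | zero => intro k; simp
    | succ d ih =>
      intro k
      have step : tkk Y (k + d + 1) ≤ tkk Y (k + d) := by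
        rcases le_or_gt (k + d + 1) 0 with hc | hc
        · have := adj_le hY (k := k + d + 1) hc
          unfold tkk skk
          rw [show (k + d + 1 - 1 : ℤ) = k + d by ring] at this
          omega
        · have := adj_ge hY (k := k + d + 1) hc
          unfold tkk skk
          rw [show (k + d + 1 - 1 : ℤ) = k + d by ring] at this
          omega
      calc tkk Y (k + (d+1)) = tkk Y (k + d + 1) := by ring_nf
        _ ≤ tkk Y (k + d) := step
        _ ≤ tkk Y k := ih k
  have := hd (k' - k).toNat k
  rwa [show k + ((k' - k).toNat : ℤ) = k' by omega] at this

lemma ukk_mono {Y : Finset (ℕ × ℕ)} (hY : IsYD Y) {k k' : ℤ} (h : k ≤ k') :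
    tkk Y k + k ≤ tkk Y k' + k' := by
  have hd : ∀ d : ℕ, ∀ k : ℤ, tkk Y k + k ≤ tkk Y (k + d) + (k + d) := by
    intro d
    induction d with
    | zero => intro k; simp
    | succ d ih =>
      intro k
      have step : tkk Y (k + d) + (k + d) ≤ tkk Y (k + d + 1) + (k + d + 1) := by
        rcases le_or_gt (k + d + 1) 0 with hc | hc
        · have := adj_le hY (k := k + d + 1) hc
          unfold tkk skk
          rw [show (k + d + 1 - 1 : ℤ) = k + d by ring] at this
          omega
        · have := adj_ge hY (k := k + d + 1) hc
          unfold tkk skk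
          rw [show (k + d + 1 - 1 : ℤ) = k + d by ring] at this
          omega
      calc tkk Y k + k ≤ tkk Y (k + d) + (k + d) := ih k
        _ ≤ tkk Y (k + d + 1) + (k + d + 1) := step
        _ = tkk Y (k + (d+1)) + (k + (d+1)) := by ring_nf
  have := hd (k' - k).toNat k
  rwa [show k + ((k' - k).toNat : ℤ) = k' by omega] at this

/-- the set of column indices (as integers) of boxes in row `i` -/
def rowI (Y : Finset (ℕ × ℕ)) (i : ℕ) : Finset ℤ :=
  (Y.filter fun p => p.1 = i).image fun p => (p.2 : ℤ)

def rlen (Y : Finset (ℕ × ℕ)) (i : ℕ) : ℤ := ((rowI Y i).card : ℤ)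

def colI (Y : Finset (ℕ × ℕ)) (j : ℕ) : Finset ℤ :=
  (Y.filter fun p => p.2 = j).image fun p => (p.1 : ℤ)

def clen (Y : Finset (ℕ × ℕ)) (j : ℕ) : ℤ := ((colI Y j).card : ℤ)

lemma mem_rowI {Y : Finset (ℕ × ℕ)} {i : ℕ} {x : ℤ} :
    x ∈ rowI Y i ↔ ∃ p ∈ Y, p.1 = i ∧ (p.2 : ℤ) = x := by
  simp only [rowI, Finset.mem_image, Finset.mem_filter]
  constructor
  · rintro ⟨p, ⟨hp, hi⟩, rfl⟩; exact ⟨p, hp, hi, rfl⟩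
  · rintro ⟨p, hp, hi, hx⟩; exact ⟨p, ⟨hp, hi⟩, hx⟩

lemma mem_colI {Y : Finset (ℕ × ℕ)} {j : ℕ} {x : ℤ} :
    x ∈ colI Y j ↔ ∃ p ∈ Y, p.2 = j ∧ (p.1 : ℤ) = x := by
  simp only [colI, Finset.mem_image, Finset.mem_filter]
  constructor
  · rintro ⟨p, ⟨hp, hi⟩, rfl⟩; exact ⟨p, hp, hi, rfl⟩
  · rintro ⟨p, hp, hi, hx⟩; exact ⟨p, ⟨hp, hi⟩, hx⟩

lemma mem_rowI_iff {Y : Finset (ℕ × ℕ)} (hY : IsYD Y) {i : ℕ} {x : ℤ} :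
    x ∈ rowI Y i ↔ 1 ≤ x ∧ x ≤ rlen Y i := by
  have hs : rowI Y i = Finset.Icc (1:ℤ) (1 + ((rowI Y i).card : ℤ) - 1) := by
    apply icc_struct
    · intro x hx
      rw [mem_rowI] at hx
      obtain ⟨p, hp, _, hx⟩ := hx
      have := hY.1 p hp; omega
    · intro x hx y h1 hyx
      rw [mem_rowI] at hx ⊢
      obtain ⟨p, hp, hi, hx⟩ := hx
      have hco := hY.1 p hp
      refine ⟨(p.1, y.toNat), hY.2 p hp _ (by omega) (by omega) le_rfl (by omega), hi, by omega⟩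
  rw [hs, Finset.mem_Icc, rlen]; omega

lemma mem_colI_iff {Y : Finset (ℕ × ℕ)} (hY : IsYD Y) {j : ℕ} {x : ℤ} :
    x ∈ colI Y j ↔ 1 ≤ x ∧ x ≤ clen Y j := by
  have hs : colI Y j = Finset.Icc (1:ℤ) (1 + ((colI Y j).card : ℤ) - 1) := by
    apply icc_struct
    · intro x hx
      rw [mem_colI] at hx
      obtain ⟨p, hp, _, hx⟩ := hx
      have := hY.1 p hp; omega
    · intro x hx y h1 hyx
      rw [mem_colI] at hx ⊢
      obtain ⟨p, hp, hi, hx⟩ := hx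
      have hco := hY.1 p hp
      refine ⟨(y.toNat, p.2), hY.2 p hp _ (by omega) (by omega) (by omega) le_rfl, hi, by omega⟩
  rw [hs, Finset.mem_Icc, clen]; omega

section HookParams

variable {Y : Finset (ℕ × ℕ)} {i j : ℕ}

/-- left and right ends of the diagonal interval of the hook at `(i,j)` -/
def hkl (Y : Finset (ℕ × ℕ)) (i j : ℕ) : ℤ := (j : ℤ) - clen Y j
def hkr (Y : Finset (ℕ × ℕ)) (i j : ℕ) : ℤ := rlen Y i - (i : ℤ)

lemma hk_le (hY : IsYD Y) (hij : (i, j) ∈ Y) :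
    hkl Y i j ≤ (j : ℤ) - i ∧ (j : ℤ) - i ≤ hkr Y i j := by
  have h1 : (i : ℤ) ∈ colI Y j := mem_colI.mpr ⟨(i, j), hij, rfl, rfl⟩
  have h2 : (j : ℤ) ∈ rowI Y i := mem_rowI.mpr ⟨(i, j), hij, rfl, rfl⟩
  rw [mem_colI_iff hY] at h1
  rw [mem_rowI_iff hY] at h2
  unfold hkl hkr; omega

lemma hook_diag_bounds (hY : IsYD Y) (hij : (i, j) ∈ Y) :
    ∀ p ∈ hook Y i j, hkl Y i j ≤ (p.2 : ℤ) - p.1 ∧ (p.2 : ℤ) - p.1 ≤ hkr Y i j := by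
  intro p hp
  rw [hook, Finset.mem_filter] at hp
  obtain ⟨hpY, hcase⟩ := hp
  have hb := hk_le hY hij
  rcases hcase with ⟨h1, h2⟩ | ⟨h1, h2⟩
  · have : (p.2 : ℤ) ∈ rowI Y i := mem_rowI.mpr ⟨p, hpY, h1, rfl⟩
    rw [mem_rowI_iff hY] at this
    unfold hkl hkr at *; omega
  · have : (p.1 : ℤ) ∈ colI Y j := mem_colI.mpr ⟨p, hpY, h1, rfl⟩
    rw [mem_colI_iff hY] at this
    unfold hkl hkr at *; omega

lemma hook_diag_inj : Set.InjOn (fun p : ℕ × ℕ => (p.2 : ℤ) - p.1) (hook Y i j) := by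
  intro p hp q hq h
  simp only [Finset.coe_sort_coe, Finset.mem_coe] at hp hq
  rw [hook, Finset.mem_filter] at hp hq
  simp only at h
  obtain ⟨-, hp⟩ := hp; obtain ⟨-, hq⟩ := hq
  rcases hp with ⟨h1, h2⟩ | ⟨h1, h2⟩ <;> rcases hq with ⟨h3, h4⟩ | ⟨h3, h4⟩ <;>
    · apply Prod.ext <;> omega

lemma hook_diag_surj (hY : IsYD Y) (hij : (i, j) ∈ Y) {k : ℤ}
    (hk : hkl Y i j ≤ k ∧ k ≤ hkr Y i j) :
    ∃ p ∈ hook Y i j, (p.2 : ℤ) - p.1 = k := by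
  have hb := hk_le hY hij
  have hco := hY.1 _ hij
  rcases le_or_gt ((j : ℤ) - i) k with hc | hc
  · have hmem : ((i : ℤ) + k) ∈ rowI Y i := by
      rw [mem_rowI_iff hY]
      unfold hkr at hk; omega
    rw [mem_rowI] at hmem
    obtain ⟨p, hp, h1, h2⟩ := hmem
    refine ⟨p, ?_, by omega⟩
    rw [hook, Finset.mem_filter]
    exact ⟨hp, Or.inl ⟨h1, by omega⟩⟩
  · have hmem : ((j : ℤ) - k) ∈ colI Y j := by
      rw [mem_colI_iff hY]
      unfold hkl at hk; omega
    rw [mem_colI] at hmem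
    obtain ⟨p, hp, h1, h2⟩ := hmem
    refine ⟨p, ?_, by omega⟩
    rw [hook, Finset.mem_filter]
    exact ⟨hp, Or.inr ⟨h1, by omega⟩⟩

lemma hook_image_diag (hY : IsYD Y) (hij : (i, j) ∈ Y) :
    (hook Y i j).image (fun p : ℕ × ℕ => (p.2 : ℤ) - p.1) = Finset.Icc (hkl Y i j) (hkr Y i j) := by
  ext k
  simp only [Finset.mem_image, Finset.mem_Icc]
  constructor
  · rintro ⟨p, hp, rfl⟩
    exact hook_diag_bounds hY hij p hp
  · intro hk
    obtain ⟨p, hp, h⟩ := hook_diag_surj hY hij hk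
    exact ⟨p, hp, h⟩

lemma Amul_hook (m' n' : ℕ) (hY : IsYD Y) (hij : (i, j) ∈ Y) :
    Amul m' n' (hook Y i j) =
      (Finset.Icc (hkl Y i j) (hkr Y i j)).val.map
        (fun k : ℤ => min (k + (m' : ℤ)) ((n' : ℤ) - k)) := by
  have h1 : Amul m' n' (hook Y i j) =
      ((hook Y i j).val.map (fun p : ℕ × ℕ => (p.2 : ℤ) - p.1)).map
        (fun k : ℤ => min (k + (m' : ℤ)) ((n' : ℤ) - k)) := by
    rw [Amul, Multiset.map_map]
    apply Multiset.map_congr rfl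
    intro p _
    simp only [Function.comp_apply, unimodal]
    congr 1 <;> omega
  rw [h1, ← Finset.image_val_of_injOn hook_diag_inj, hook_image_diag hY hij]

lemma hook_filter_card (hY : IsYD Y) (hij : (i, j) ∈ Y) (k : ℤ) :
    (((hook Y i j).filter fun p => (p.2 : ℤ) - (p.1 : ℤ) = k).card : ℤ)
      = if hkl Y i j ≤ k ∧ k ≤ hkr Y i j then 1 else 0 := by
  split_ifs with h
  · obtain ⟨p, hp, hpd⟩ := hook_diag_surj hY hij h
    rw [show (((hook Y i j).filter fun p => (p.2 : ℤ) - (p.1 : ℤ) = k)) = {p} from ?_]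
    · simp
    · ext q
      simp only [Finset.mem_filter, Finset.mem_singleton]
      constructor
      · rintro ⟨hq, hqd⟩
        exact hook_diag_inj hq hp (by simp only; omega)
      · rintro rfl; exact ⟨hp, hpd⟩
  · rw [Finset.filter_false_of_mem, Finset.card_empty]
    · simp
    · intro p hp hpd
      have := hook_diag_bounds hY hij p hp
      omega

lemma hook_subset : hook Y i j ⊆ Y := Finset.filter_subset _ _

lemma shift_injOn : Set.InjOn (shiftBox i j) (Y \ hook Y i j) := by
  intro p hp q hq h
  simp only [Finset.coe_sdiff, Set.mem_diff, Finset.mem_coe] at hp hq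
  unfold shiftBox at h
  split_ifs at h with h1 h2 h2
  · -- both shifted
    have hpc : 1 ≤ p.1 ∧ 1 ≤ p.2 := ⟨by omega, by omega⟩
    have hqc : 1 ≤ q.1 ∧ 1 ≤ q.2 := ⟨by omega, by omega⟩
    have := congrArg Prod.fst h
    have := congrArg Prod.snd h
    simp only at *
    apply Prod.ext <;> omega
  · -- p shifted, q not: q = (p.1-1, p.2-1) with q.1 = i or q.2 = j  → q ∈ hook, contra
    exfalso
    apply hq.2
    rw [hook, Finset.mem_filter]
    refine ⟨hq.1, ?_⟩
    have e1 : q.1 = p.1 - 1 := by rw [← h]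
    have e2 : q.2 = p.2 - 1 := by rw [← h]
    rcases Decidable.not_and_iff_or_not.mp h2 with h3 | h3
    · left; constructor <;> omega
    · right; constructor <;> omega
  · exfalso
    apply hp.2
    rw [hook, Finset.mem_filter]
    refine ⟨hp.1, ?_⟩
    have e1 : p.1 = q.1 - 1 := by rw [h]
    have e2 : p.2 = q.2 - 1 := by rw [h]
    rcases Decidable.not_and_iff_or_not.mp h1 with h3 | h3
    · left; constructor <;> omega
    · right; constructor <;> omega
  · exact h

lemma shift_diag (p : ℕ × ℕ) (hp1 : 1 ≤ p.1) (hp2 : 1 ≤ p.2) :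
    ((shiftBox i j p).2 : ℤ) - (shiftBox i j p).1 = (p.2 : ℤ) - p.1 := by
  unfold shiftBox
  split_ifs with h
  · simp only
    omega
  · rfl

lemma dk_removeHook (hY : IsYD Y) (hij : (i, j) ∈ Y) (k : ℤ) :
    dk (removeHook Y i j) k
      = dk Y k - (if hkl Y i j ≤ k ∧ k ≤ hkr Y i j then 1 else 0) := by
  have hN : ((removeHook Y i j).filter fun p => (p.2 : ℤ) - (p.1 : ℤ) = k).card
      = ((Y \ hook Y i j).filter fun p => (p.2 : ℤ) - (p.1 : ℤ) = k).card := by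
    rw [removeHook, Finset.filter_image]
    rw [Finset.card_image_of_injOn ((shift_injOn (Y := Y) (i := i) (j := j)).mono (by
      intro x hx
      simp only [Finset.coe_filter, Set.mem_setOf_eq] at hx
      simp only [Finset.coe_sdiff, Set.mem_diff, Finset.mem_coe]
      have := Finset.mem_sdiff.mp hx.1
      exact ⟨this.1, this.2⟩))]
    congr 1
    apply Finset.filter_congr
    intro p hp
    have hpY := (Finset.mem_sdiff.mp hp).1
    have hco := hY.1 p hpY
    rw [shift_diag p (by omega) (by omega)]
  have hsplit : ((Y \ hook Y i j).filter fun p => (p.2 : ℤ) - (p.1 : ℤ) = k)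
      = (Y.filter fun p => (p.2 : ℤ) - (p.1 : ℤ) = k)
        \ ((hook Y i j).filter fun p => (p.2 : ℤ) - (p.1 : ℤ) = k) := by
    ext p
    simp only [Finset.mem_filter, Finset.mem_sdiff]
    constructor
    · rintro ⟨⟨h1, h2⟩, h3⟩
      exact ⟨⟨h1, h3⟩, fun hc => h2 hc.1⟩
    · rintro ⟨⟨h1, h3⟩, h2⟩
      exact ⟨⟨h1, fun hc => h2 ⟨hc, h3⟩⟩, h3⟩
  have hsub : ((hook Y i j).filter fun p => (p.2 : ℤ) - (p.1 : ℤ) = k)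
      ⊆ (Y.filter fun p => (p.2 : ℤ) - (p.1 : ℤ) = k) :=
    Finset.filter_subset_filter _ hook_subset
  have hcard := Finset.card_sdiff_of_subset hsub
  have hle := Finset.card_le_card hsub
  have hfc := hook_filter_card hY hij k
  unfold dk
  rw [hN, hsplit, hcard]
  push_cast
  omega

lemma mem_removeHook_iff (hY : IsYD Y) (q : ℕ × ℕ) :
    q ∈ removeHook Y i j ↔
      (q ∈ Y ∧ (q.1 < i ∨ q.2 < j)) ∨ ((q.1 + 1, q.2 + 1) ∈ Y ∧ i ≤ q.1 ∧ j ≤ q.2) := by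
  rw [removeHook, Finset.mem_image]
  constructor
  · rintro ⟨p, hp, rfl⟩
    rw [Finset.mem_sdiff] at hp
    obtain ⟨hpY, hph⟩ := hp
    have hco := hY.1 p hpY
    unfold shiftBox
    split_ifs with h
    · right
      simp only
      constructor
      · rw [show (p.1 - 1 + 1, p.2 - 1 + 1) = p from ?_]
        · exact hpY
        · apply Prod.ext <;> simp <;> omega
      · omega
    · left
      refine ⟨hpY, ?_⟩
      by_contra hc
      push_neg at hc
      apply hph
      rw [hook, Finset.mem_filter]
      refine ⟨hpY, ?_⟩
      rcases Decidable.not_and_iff_or_not.mp h with h3 | h3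
      · left; constructor <;> omega
      · right; constructor <;> omega
  · rintro (⟨hqY, hq⟩ | ⟨hqY, hq1, hq2⟩)
    · refine ⟨q, ?_, ?_⟩
      · rw [Finset.mem_sdiff]
        refine ⟨hqY, ?_⟩
        intro hc
        rw [hook, Finset.mem_filter] at hc
        rcases hc.2 with ⟨h1, h2⟩ | ⟨h1, h2⟩ <;> omega
      · unfold shiftBox
        rw [if_neg (by omega)]
    · refine ⟨(q.1 + 1, q.2 + 1), ?_, ?_⟩
      · rw [Finset.mem_sdiff]
        refine ⟨hqY, ?_⟩
        intro hc
        rw [hook, Finset.mem_filter] at hc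
        rcases hc.2 with ⟨h1, h2⟩ | ⟨h1, h2⟩ <;> omega
      · unfold shiftBox
        rw [if_pos (by constructor <;> simp <;> omega)]
        simp

lemma isYD_removeHook (hY : IsYD Y) (hij : (i, j) ∈ Y) : IsYD (removeHook Y i j) := by
  have hco := hY.1 _ hij
  constructor
  · intro p hp
    rw [mem_removeHook_iff hY] at hp
    rcases hp with ⟨h1, -⟩ | ⟨-, h1, h2⟩
    · exact hY.1 p h1
    · omega
  · intro p hp q hq1 hq2 hq3 hq4
    rw [mem_removeHook_iff hY] at hp ⊢
    rcases hp with ⟨h1, h2⟩ | ⟨h1, h2, h3⟩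
    · left
      exact ⟨hY.2 p h1 q hq1 hq2 hq3 hq4, by omega⟩
    · rcases le_or_gt i q.1 with hi | hi
      · rcases le_or_gt j q.2 with hj | hj
        · right
          refine ⟨hY.2 _ h1 (q.1 + 1, q.2 + 1) (by omega) (by omega) (by simp; omega) (by simp; omega), hi, hj⟩
        · left
          exact ⟨hY.2 _ h1 q hq1 hq2 (by simp; omega) (by simp; omega), Or.inr hj⟩
      · left
        exact ⟨hY.2 _ h1 q hq1 hq2 (by simp; omega) (by simp; omega), Or.inl hi⟩

lemma removeHook_subset_rect {m' n' : ℕ} (hY : IsYD Y) (hij : (i, j) ∈ Y)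
    (hYr : Y ⊆ rect m' n') :
    removeHook Y i j ⊆ rect m' n' := by
  have hco := hY.1 _ hij
  intro q hq
  rw [mem_removeHook_iff hY] at hq
  rcases hq with ⟨h1, -⟩ | ⟨h1, h2, h3⟩
  · exact hYr h1
  · have := hYr h1
    simp [rect] at this ⊢
    omega

end HookParams


/-- folded value: `min k (2c+1-k)` -/
def wfun (c k : ℤ) : ℤ := min k (2*c+1-k)

noncomputable def tentW (c l r : ℤ) : Multiset ℤ := (Finset.Icc l r).val.map (wfun c)

lemma count_Icc_val (a b x : ℤ) :
    (Finset.Icc a b).val.count x = if a ≤ x ∧ x ≤ b then 1 else 0 := by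
  split_ifs with h
  · exact Multiset.count_eq_one_of_mem (Finset.Icc a b).nodup
      (by rw [Finset.mem_val, Finset.mem_Icc]; exact h)
  · exact Multiset.count_eq_zero_of_notMem
      (by rw [Finset.mem_val, Finset.mem_Icc]; exact h)

lemma icc_val_split (c l r : ℤ) :
    (Finset.Icc l r).val = (Finset.Icc l (min r c)).val + (Finset.Icc (max l (c+1)) r).val := by
  ext x
  rw [Multiset.count_add, count_Icc_val, count_Icc_val, count_Icc_val]
  split_ifs <;> omega

lemma map_rho_icc (c a b : ℤ) :
    (Finset.Icc a b).val.map (fun k => 2*c+1-k) = (Finset.Icc (2*c+1-b) (2*c+1-a)).val := by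
  have himg : (Finset.Icc a b).image (fun k => 2*c+1-k) = Finset.Icc (2*c+1-b) (2*c+1-a) := by
    ext x
    simp only [Finset.mem_image, Finset.mem_Icc]
    constructor
    · rintro ⟨k, hk, rfl⟩; omega
    · intro hx; exact ⟨2*c+1-x, by omega, by omega⟩
  have hinj : Set.InjOn (fun k => 2*c+1-k) (Finset.Icc a b) := by
    intro p _ q _ h; simp only at h; omega
  rw [← Finset.image_val_of_injOn hinj, himg]

lemma tentW_split (c l r : ℤ) :
    tentW c l r
      = (Finset.Icc l (min r c)).val + (Finset.Icc (2*c+1-r) (min (2*c+1-l) c)).val := by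
  rw [tentW, icc_val_split c l r, Multiset.map_add]
  congr 1
  · rw [show (Finset.Icc l (min r c)).val.map (wfun c) = (Finset.Icc l (min r c)).val.map id from ?_,
      Multiset.map_id]
    apply Multiset.map_congr rfl
    intro k hk
    rw [Finset.mem_val, Finset.mem_Icc] at hk
    unfold wfun
    simp only [id_eq, min_def]
    split_ifs <;> omega
  · rw [show (Finset.Icc (max l (c+1)) r).val.map (wfun c)
        = (Finset.Icc (max l (c+1)) r).val.map (fun k => 2*c+1-k) from ?_]
    · rw [map_rho_icc,
        show 2*c+1 - max l (c+1) = min (2*c+1-l) c from by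
          simp only [min_def, max_def]; split_ifs <;> omega]
    · apply Multiset.map_congr rfl
      intro k hk
      rw [Finset.mem_val, Finset.mem_Icc] at hk
      unfold wfun
      simp only [min_def]
      split_ifs <;> omega

lemma tentW_reflect (c l r : ℤ) :
    tentW c (2*c+1-r) (2*c+1-l) = tentW c l r := by
  rw [tentW_split, tentW_split]
  rw [show 2*c+1-(2*c+1-l) = l by ring, show 2*c+1-(2*c+1-r) = r by ring]
  rw [add_comm]

lemma sl_single {a b a' b' : ℤ} (hab : a ≤ b)
    (h : (Finset.Icc a b).val = (Finset.Icc a' b').val) : a' = a ∧ b' = b := by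
  have hF : Finset.Icc a b = Finset.Icc a' b' := Finset.val_inj.mp h
  have h1 : a ∈ Finset.Icc a' b' := by rw [← hF, Finset.mem_Icc]; omega
  have h2 : b ∈ Finset.Icc a' b' := by rw [← hF, Finset.mem_Icc]; omega
  have hne : a' ≤ b' := by rw [Finset.mem_Icc] at h1; omega
  have h3 : a' ∈ Finset.Icc a b := by rw [hF, Finset.mem_Icc]; omega
  have h4 : b' ∈ Finset.Icc a b := by rw [hF, Finset.mem_Icc]; omega
  rw [Finset.mem_Icc] at h1 h2 h3 h4
  omega

lemma sl_sum2 {c a b a' b' : ℤ} (ha : a ≤ c) (hb : b ≤ c) (ha' : a' ≤ c) (hb' : b' ≤ c)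
    (h : (Finset.Icc a c).val + (Finset.Icc b c).val
       = (Finset.Icc a' c).val + (Finset.Icc b' c).val) :
    (a' = a ∧ b' = b) ∨ (a' = b ∧ b' = a) := by
  have hcard := congrArg Multiset.card h
  simp only [Multiset.card_add, Finset.card_val] at hcard
  have e1 : (Finset.Icc a c).card = (c + 1 - a).toNat := Int.card_Icc _ _
  have e2 : (Finset.Icc b c).card = (c + 1 - b).toNat := Int.card_Icc _ _
  have e3 : (Finset.Icc a' c).card = (c + 1 - a').toNat := Int.card_Icc _ _
  have e4 : (Finset.Icc b' c).card = (c + 1 - b').toNat := Int.card_Icc _ _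
  rw [e1, e2, e3, e4] at hcard
  have hsum : a + b = a' + b' := by omega
  have hma : a ∈ (Finset.Icc a' c).val + (Finset.Icc b' c).val := by
    rw [← h, Multiset.mem_add]
    left; rw [Finset.mem_val, Finset.mem_Icc]; omega
  have hma' : a' ∈ (Finset.Icc a c).val + (Finset.Icc b c).val := by
    rw [h, Multiset.mem_add]
    left; rw [Finset.mem_val, Finset.mem_Icc]; omega
  have hmb : b ∈ (Finset.Icc a' c).val + (Finset.Icc b' c).val := by
    rw [← h, Multiset.mem_add]
    right; rw [Finset.mem_val, Finset.mem_Icc]; omega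
  have hmb' : b' ∈ (Finset.Icc a c).val + (Finset.Icc b c).val := by
    rw [h, Multiset.mem_add]
    right; rw [Finset.mem_val, Finset.mem_Icc]; omega
  rw [Multiset.mem_add, Finset.mem_val, Finset.mem_val, Finset.mem_Icc, Finset.mem_Icc]
    at hma hma' hmb hmb'
  rcases hma with h1 | h1 <;> rcases hma' with h2 | h2 <;>
    rcases hmb with h3 | h3 <;> rcases hmb' with h4 | h4 <;> omega

lemma sl_mixed {a b a' b' cc : ℤ} (ha' : a' ≤ cc) (hb' : b' ≤ cc)
    (h : (Finset.Icc a b).val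
       = (Finset.Icc a' cc).val + (Finset.Icc b' cc).val) : False := by
  have := congrArg (Multiset.count cc) h
  rw [Multiset.count_add, count_Icc_val, count_Icc_val, count_Icc_val] at this
  split_ifs at this <;> omega

/-- The key rigidity of tent multisets: equal tents come from equal or reflected
intervals. -/
lemma tent_rigid {c l r l' r' : ℤ} (hlr : l ≤ r) (hlr' : l' ≤ r')
    (h : tentW c l' r' = tentW c l r) :
    (l' = l ∧ r' = r) ∨ (l' = 2*c+1-r ∧ r' = 2*c+1-l) := by
  rw [tentW_split, tentW_split] at h
  have hempty : ∀ u v : ℤ, v < u → (Finset.Icc u v).val = 0 := by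
    intro u v huv
    rw [Finset.Icc_eq_empty (by omega)]; rfl
  rcases le_or_gt r c with hr | hr
  · -- I left : RHS = Icc l r
    rw [show min r c = r by omega,
        hempty (2*c+1-r) (min (2*c+1-l) c) (by omega), add_zero] at h
    rcases le_or_gt r' c with hr' | hr'
    · rw [show min r' c = r' by omega,
          hempty (2*c+1-r') (min (2*c+1-l') c) (by omega), add_zero] at h
      have := sl_single hlr' h
      left; omega
    · rcases le_or_gt l' c with hl' | hl'
      · exfalso
        rw [show min r' c = c by omega, show min (2*c+1-l') c = c by omega] at h
        exact sl_mixed (show l' ≤ c by omega) (show 2*c+1-r' ≤ c by omega) h.symm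
      · rw [hempty l' (min r' c) (by omega), zero_add,
            show min (2*c+1-l') c = 2*c+1-l' by omega] at h
        have := sl_single (show (2*c+1-r' : ℤ) ≤ 2*c+1-l' by omega) h
        right; omega
  · rcases le_or_gt l c with hl | hl
    · -- I spans : RHS = Icc l c + Icc (2c+1-r) c
      rw [show min r c = c by omega, show min (2*c+1-l) c = c by omega] at h
      rcases le_or_gt r' c with hr' | hr'
      · exfalso
        rw [show min r' c = r' by omega,
            hempty (2*c+1-r') (min (2*c+1-l') c) (by omega), add_zero] at h
        exact sl_mixed (show l ≤ c by omega) (show 2*c+1-r ≤ c by omega) h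
      · rcases le_or_gt l' c with hl' | hl'
        · rw [show min r' c = c by omega, show min (2*c+1-l') c = c by omega] at h
          have := sl_sum2 (show l' ≤ c by omega) (show 2*c+1-r' ≤ c by omega)
            (show l ≤ c by omega) (show 2*c+1-r ≤ c by omega) h
          rcases this with ⟨h1, h2⟩ | ⟨h1, h2⟩
          · left; omega
          · right; omega
        · exfalso
          rw [hempty l' (min r' c) (by omega), zero_add,
              show min (2*c+1-l') c = 2*c+1-l' by omega] at h
          exact sl_mixed (show l ≤ c by omega) (show 2*c+1-r ≤ c by omega) h
    · -- I right : RHS = Icc (2c+1-r) (2c+1-l)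
      rw [hempty l (min r c) (by omega), zero_add,
          show min (2*c+1-l) c = 2*c+1-l by omega] at h
      rcases le_or_gt r' c with hr' | hr'
      · rw [show min r' c = r' by omega,
            hempty (2*c+1-r') (min (2*c+1-l') c) (by omega), add_zero] at h
        have := sl_single hlr' h
        right; omega
      · rcases le_or_gt l' c with hl' | hl'
        · exfalso
          rw [show min r' c = c by omega, show min (2*c+1-l') c = c by omega] at h
          exact sl_mixed (show l' ≤ c by omega) (show 2*c+1-r' ≤ c by omega) h.symm
        · rw [hempty l' (min r' c) (by omega), zero_add,
              show min (2*c+1-l') c = 2*c+1-l' by omega] at h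
          have := sl_single (show (2*c+1-r' : ℤ) ≤ 2*c+1-l' by omega) h
          left; omega

/-- relation with the unimodal tent values -/
lemma tent_as_wmap {m n : ℕ} {c : ℤ} (hc : 2*c = (n:ℤ) - m) (l r : ℤ) :
    (Finset.Icc l r).val.map (fun k : ℤ => min (k + (m : ℤ)) ((((n : ℕ) + 1 : ℕ) : ℤ) - k))
      = (tentW c l r).map (fun w : ℤ => w + (m : ℤ)) := by
  rw [tentW, Multiset.map_map]
  apply Multiset.map_congr rfl
  intro k _
  simp only [Function.comp_apply, wfun, min_def]
  push_cast
  split_ifs <;> omega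



/-- Existence of a hook with prescribed diagonal interval `[l, r]`. -/
lemma hook_exists {Y : Finset (ℕ × ℕ)} (hY : IsYD Y) {l r : ℤ} (hlr : l ≤ r)
    (hbl : bitz Y l = 1) (hbr : bitz Y (r + 1) = 0) :
    ∃ i j : ℕ, (i, j) ∈ Y ∧ hkl Y i j = l ∧ hkr Y i j = r := by
  unfold bitz at hbl hbr
  rw [show (r + 1 - 1 : ℤ) = r by ring] at hbr
  -- positivity
  have haR : 1 ≤ dk Y r := by
    rcases le_or_gt 0 r with h | h
    · have := dk_nonneg Y (r + 1)
      rw [if_pos (by omega)] at hbr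
      omega
    · -- r ≤ -1 so l ≤ 0; get 1 ≤ dk Y l first
      have hl0 : l ≤ 0 := by omega
      have hal : 1 ≤ dk Y l := by
        rw [if_neg (by omega)] at hbl
        have := dk_nonneg Y (l - 1)
        omega
      have := mono_neg hY hlr (by omega)
      omega
  have haL : 1 ≤ dk Y l := by
    rcases le_or_gt l 0 with h | h
    · rw [if_neg (by omega)] at hbl
      have := dk_nonneg Y (l - 1)
      omega
    · have := mono_pos hY hlr h
      omega
  -- t-facts at the two ends
  have htR : tkk Y (r + 1) < tkk Y r := by
    unfold tkk skk at *
    rcases le_or_gt 1 (r + 1) with h | h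
    · rw [if_pos h] at hbr; omega
    · rw [if_neg (by omega)] at hbr; omega
  have htL : tkk Y (l - 1) ≤ tkk Y l := by
    unfold tkk skk at *
    rcases le_or_gt 1 l with h | h
    · rw [if_pos h] at hbl; omega
    · rw [if_neg (by omega)] at hbl; omega
  set i0 : ℤ := tkk Y r with hi0
  set j0 : ℤ := tkk Y l + l with hj0
  have hi0pos : 1 ≤ i0 := by
    have : skk r ≤ tkk Y r := by unfold tkk; omega
    have : 1 ≤ skk r := le_max_left _ _
    unfold skk at *; omega
  have hj0pos : 1 ≤ j0 := by
    have h1 : skk l ≤ tkk Y l := by unfold tkk; omega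
    have h2 : 1 - l ≤ skk l := le_max_right _ _
    omega
  -- the corner diagonal
  set k0 : ℤ := j0 - i0 with hk0
  have hk0l : l ≤ k0 := by
    have := tkk_mono hY hlr
    omega
  have hk0r : k0 ≤ r := by
    have := ukk_mono hY hlr
    omega
  -- corner membership
  have hcorner : i0 ∈ diagI Y k0 := by
    rw [mem_diag_iff hY]
    constructor
    · unfold skk; omega
    · have := tkk_mono hY hk0r
      omega
  rw [mem_diagI] at hcorner
  obtain ⟨p, hp, hp1, hp2⟩ := hcorner
  refine ⟨p.1, p.2, by rwa [Prod.mk.eta], ?_, ?_⟩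
  · -- hkl = l : clen Y p.2 = j0 - l = tkk Y l
    have hj0p : (p.2 : ℤ) = j0 := by omega
    have h1 : tkk Y l ∈ colI Y p.2 := by
      have := tkk_mem hY haL
      rw [mem_diagI] at this
      obtain ⟨q, hq, hq1, hq2⟩ := this
      rw [mem_colI]
      exact ⟨q, hq, by omega, hq1⟩
    have h2 : tkk Y l + 1 ∉ colI Y p.2 := by
      intro hc
      rw [mem_colI] at hc
      obtain ⟨q, hq, hq1, hq2⟩ := hc
      have : (tkk Y l + 1 : ℤ) ∈ diagI Y (l - 1) := by
        rw [mem_diagI]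
        exact ⟨q, hq, hq2, by omega⟩
      rw [mem_diag_iff hY] at this
      omega
    rw [mem_colI_iff hY] at h1
    have h3 : ¬ (1 ≤ tkk Y l + 1 ∧ tkk Y l + 1 ≤ clen Y p.2) := by
      rw [← mem_colI_iff hY]; exact h2
    unfold hkl
    omega
  · -- hkr = r : rlen Y p.1 = i0 + r
    have hi0p : (p.1 : ℤ) = i0 := hp1
    have h1 : i0 + r ∈ rowI Y p.1 := by
      have := tkk_mem hY haR
      rw [mem_diagI] at this
      obtain ⟨q, hq, hq1, hq2⟩ := this
      rw [mem_rowI]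
      exact ⟨q, hq, by omega, by omega⟩
    have h2 : i0 + r + 1 ∉ rowI Y p.1 := by
      intro hc
      rw [mem_rowI] at hc
      obtain ⟨q, hq, hq1, hq2⟩ := hc
      have : i0 ∈ diagI Y (r + 1) := by
        rw [mem_diagI]
        exact ⟨q, hq, by omega, by omega⟩
      rw [mem_diag_iff hY] at this
      omega
    rw [mem_rowI_iff hY] at h1
    have h3 : ¬ (1 ≤ i0 + r + 1 ∧ i0 + r + 1 ≤ rlen Y p.1) := by
      rw [← mem_rowI_iff hY]; exact h2
    unfold hkr
    omega

lemma isYD_rect (m n' : ℕ) : IsYD (rect m n') := by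
  constructor
  · intro p hp
    simp only [rect, Finset.mem_product, Finset.mem_Icc] at hp
    omega
  · intro p hp q h1 h2 h3 h4
    simp only [rect, Finset.mem_product, Finset.mem_Icc] at hp ⊢
    omega

lemma dk_rect (m n' : ℕ) (k : ℤ) :
    dk (rect m n') k = max 0 (min (m : ℤ) ((n' : ℤ) - k) + 1 - max 1 (1 - k)) := by
  have h : diagI (rect m n') k = Finset.Icc (max 1 (1 - k)) (min (m : ℤ) ((n' : ℤ) - k)) := by
    ext x
    rw [mem_diagI, Finset.mem_Icc]
    constructor
    · rintro ⟨p, hp, h1, h2⟩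
      simp only [rect, Finset.mem_product, Finset.mem_Icc] at hp
      omega
    · intro hx
      refine ⟨(x.toNat, (x + k).toNat), ?_, by omega, by omega⟩
      simp only [rect, Finset.mem_product, Finset.mem_Icc]
      omega
  have hcard : dk (rect m n') k = ((diagI (rect m n') k).card : ℤ) := by
    unfold dk diagI
    congr 1
    rw [Finset.card_image_of_injOn]
    intro p hp q hq hpq
    simp only [Finset.coe_filter, Set.mem_setOf_eq] at hp hq
    have h1 : (p.1 : ℤ) = (q.1 : ℤ) := hpq
    have hd1 := hp.2; have hd2 := hq.2
    have h2 : (p.2 : ℤ) = (q.2 : ℤ) := by omega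
    exact Prod.ext (by exact_mod_cast h1) (by exact_mod_cast h2)
  rw [hcard, h, Int.card_Icc]
  omega

/-- the invariant -/
def Good (m n : ℕ) (c : ℤ) (Y : Finset (ℕ × ℕ)) : Prop :=
  IsYD Y ∧ Y ⊆ rect m (n + 1) ∧ ∀ x : ℤ, bitz Y x = 0 → bitz Y (2*c + 2 - x) = 1

lemma bit_flip {Y₁ Y : Finset (ℕ × ℕ)} {l r : ℤ} (hlr : l ≤ r)
    (hcut : ∀ k, dk Y₁ k = dk Y k - (if l ≤ k ∧ k ≤ r then 1 else 0)) (x : ℤ) :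
    bitz Y₁ x = bitz Y x - (if x = l then 1 else 0) + (if x = r + 1 then 1 else 0) := by
  unfold bitz
  rw [hcut x, hcut (x - 1)]
  split_ifs <;> omega

lemma good_rect (m n : ℕ) (c : ℤ) (hm : 1 ≤ m) (hmn : m ≤ n) (hc : 2*c = (n:ℤ) - m) :
    Good m n c (rect m (n + 1)) := by
  refine ⟨isYD_rect _ _, le_refl _, ?_⟩
  intro x hx
  unfold bitz at hx ⊢
  rw [dk_rect, dk_rect] at hx
  rw [dk_rect, dk_rect]
  have hn1 : ((n + 1 : ℕ) : ℤ) = (n : ℤ) + 1 := by push_cast; ring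
  rw [hn1] at hx ⊢
  split_ifs at hx ⊢ <;> omega

lemma good_step {m n : ℕ} {c : ℤ} (hm : 1 ≤ m) (hmn : m ≤ n) (hc : 2*c = (n:ℤ) - m)
    {Y Y' : Finset (ℕ × ℕ)} (hG : Good m n c Y) (hmv : Move m (n + 1) Y Y') :
    Good m n c Y' := by
  obtain ⟨hYD, hYr, hΛ⟩ := hG
  obtain ⟨i, j, hij, hbr⟩ := hmv
  set Y₁ := removeHook Y i j with hY₁def
  set l := hkl Y i j with hldef
  set r := hkr Y i j with hrdef
  have hlr : l ≤ r := by have := hk_le hYD hij; omega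
  have hY1D : IsYD Y₁ := isYD_removeHook hYD hij
  have hY1r : Y₁ ⊆ rect m (n+1) := removeHook_subset_rect hYD hij hYr
  have hb1 : ∀ x, bitz Y₁ x
      = bitz Y x - (if x = l then 1 else 0) + (if x = r + 1 then 1 else 0) :=
    bit_flip hlr (dk_removeHook hYD hij)
  have hBl : bitz Y l = 1 := by
    have h1 := hb1 l
    rw [if_pos rfl, if_neg (by omega)] at h1
    rcases bitz01 hYD l with h | h <;> rcases bitz01 hY1D l with h' | h' <;> omega
  have hBr : bitz Y (r + 1) = 0 := by
    have h2 := hb1 (r + 1)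
    rw [if_neg (by omega), if_pos rfl] at h2
    rcases bitz01 hYD (r+1) with h | h <;> rcases bitz01 hY1D (r+1) with h' | h' <;> omega
  have hAmulY : Amul m (n+1) (hook Y i j) = (tentW c l r).map (fun w : ℤ => w + (m:ℤ)) := by
    rw [Amul_hook m (n+1) hYD hij, ← hldef, ← hrdef]
    exact tent_as_wmap hc l r
  -- matched hooks have the reflected interval
  have hkey : ∀ i' j', (i', j') ∈ Y₁ →
      Amul m (n+1) (hook Y₁ i' j') = Amul m (n+1) (hook Y i j) →
      hkl Y₁ i' j' = 2*c+1-r ∧ hkr Y₁ i' j' = 2*c+1-l := by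
    intro i' j' hij' hAeq
    have hlr2 : hkl Y₁ i' j' ≤ hkr Y₁ i' j' := by have := hk_le hY1D hij'; omega
    have hA2 : Amul m (n+1) (hook Y₁ i' j') =
        (tentW c (hkl Y₁ i' j') (hkr Y₁ i' j')).map (fun w : ℤ => w + (m:ℤ)) := by
      rw [Amul_hook m (n+1) hY1D hij']
      exact tent_as_wmap hc _ _
    have htw : tentW c (hkl Y₁ i' j') (hkr Y₁ i' j') = tentW c l r := by
      apply Multiset.map_injective (f := fun w : ℤ => w + (m:ℤ)) (add_left_injective _)
      rw [← hA2, ← hAmulY, hAeq]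
    have hB2 : bitz Y₁ (hkl Y₁ i' j') = 1 := by
      have hbb := bit_flip hlr2 (dk_removeHook hY1D hij') (hkl Y₁ i' j')
      rw [if_pos rfl, if_neg (by omega)] at hbb
      have hY2D := isYD_removeHook hY1D hij'
      rcases bitz01 hY1D (hkl Y₁ i' j') with h | h <;>
        rcases bitz01 hY2D (hkl Y₁ i' j') with h' | h' <;> omega
    rcases tent_rigid hlr hlr2 htw with ⟨h1, h2⟩ | ⟨h1, h2⟩
    · exfalso
      have h3 := hb1 l
      rw [if_pos rfl, if_neg (by omega)] at h3
      rw [h1] at hB2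
      omega
    · exact ⟨h1, h2⟩
  rcases hbr with ⟨rfl, hno⟩ | ⟨i', j', hij', hAeq, rfl⟩
  · -- single removal happened: no matching hook exists
    refine ⟨hY1D, hY1r, ?_⟩
    have hNA : ¬ (bitz Y₁ (2*c+1-r) = 1 ∧ bitz Y₁ (2*c+2-l) = 0) := by
      rintro ⟨h1, h2⟩
      apply hno
      obtain ⟨i', j', hmem, hl', hr'⟩ :=
        hook_exists hY1D (l := 2*c+1-r) (r := 2*c+1-l) (by omega) h1
          (by rw [show (2*c+1-l+1 : ℤ) = 2*c+2-l by ring]; exact h2)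
      refine ⟨i', j', hmem, ?_⟩
      rw [Amul_hook m (n+1) hY1D hmem, hl', hr', tent_as_wmap hc, tentW_reflect, hAmulY]
    intro x hx
    by_cases hxl : x = l
    · rw [hxl] at hx ⊢
      rcases bitz01 hY1D (2*c+2-l) with h2 | h2
      · exfalso
        rcases bitz01 hY1D (2*c+1-r) with h3 | h3
        · by_cases hcl : 2*c+1-r = l
          · have h5 := hb1 (r+1)
            rw [if_neg (by omega), if_pos rfl] at h5
            rw [show (2*c+2-l : ℤ) = r + 1 by omega] at h2
            omega
          · by_cases hcr : 2*c+1-r = r+1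
            · rw [hcr] at h3
              have h5 := hb1 (r+1)
              rw [if_neg (by omega), if_pos rfl] at h5
              omega
            · have h4 := hb1 (2*c+1-r)
              rw [if_neg hcl, if_neg hcr] at h4
              have h6 := hΛ (r+1) hBr
              rw [show (2*c+2-(r+1) : ℤ) = 2*c+1-r by ring] at h6
              omega
        · exact hNA ⟨h3, h2⟩
      · exact h2
    · by_cases hxr : x = r+1
      · exfalso
        have h5 := hb1 (r+1)
        rw [if_neg (by omega), if_pos rfl] at h5
        rw [hxr] at hx
        omega
      · have h4 := hb1 x
        rw [if_neg hxl, if_neg hxr] at h4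
        have hBx : bitz Y x = 0 := by omega
        have hσ := hΛ x hBx
        by_cases hsl : 2*c+2-x = l
        · exfalso
          rcases bitz01 hY1D (2*c+1-r) with h3 | h3
          · by_cases hcl : 2*c+1-r = l
            · exact hxr (by omega)
            · by_cases hcr : 2*c+1-r = r+1
              · have h5 := hb1 (r+1)
                rw [if_neg (by omega), if_pos rfl] at h5
                rw [hcr] at h3
                omega
              · have h4' := hb1 (2*c+1-r)
                rw [if_neg hcl, if_neg hcr] at h4'
                have h6 := hΛ (r+1) hBr
                rw [show (2*c+2-(r+1) : ℤ) = 2*c+1-r by ring] at h6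
                omega
          · apply hNA
            refine ⟨h3, ?_⟩
            rw [show (2*c+2-l : ℤ) = x by omega]
            exact hx
        · by_cases hsr : 2*c+2-x = r+1
          · have h5 := hb1 (r+1)
            rw [if_neg (by omega), if_pos rfl] at h5
            rw [hsr]
            omega
          · have h6 := hb1 (2*c+2-x)
            rw [if_neg hsl, if_neg hsr] at h6
            omega
  · -- double removal
    obtain ⟨hl2, hr2⟩ := hkey i' j' hij' hAeq
    have hlr2 : hkl Y₁ i' j' ≤ hkr Y₁ i' j' := by have := hk_le hY1D hij'; omega
    have hY2D := isYD_removeHook hY1D hij'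
    have hY2r := removeHook_subset_rect hY1D hij' hY1r
    refine ⟨hY2D, hY2r, ?_⟩
    have hb2 : ∀ x, bitz (removeHook Y₁ i' j') x
        = bitz Y₁ x - (if x = 2*c+1-r then 1 else 0) + (if x = 2*c+2-l then 1 else 0) := by
      intro x
      have := bit_flip hlr2 (dk_removeHook hY1D hij') x
      rw [hl2, hr2, show (2*c+1-l+1 : ℤ) = 2*c+2-l by ring] at this
      exact this
    intro x hx
    have cond_swap : ∀ u v : ℤ, v = 2*c+2-u →
        (if 2*c+2-x = u then (1:ℤ) else 0) = (if x = v then 1 else 0) := by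
      intro u v hv
      split_ifs <;> omega
    have e1 := hb1 x
    have e2 := hb1 (2*c+2-x)
    have f1 := hb2 x
    have f2 := hb2 (2*c+2-x)
    rw [cond_swap l (2*c+2-l) rfl, cond_swap (r+1) (2*c+1-r) (by ring)] at e2
    rw [cond_swap (2*c+1-r) (r+1) (by ring), cond_swap (2*c+2-l) l (by ring)] at f2
    have o1 := bitz01 hYD x
    have o2 := bitz01 hYD (2*c+2-x)
    have g2 := bitz01 hY2D (2*c+2-x)
    have hsum : bitz Y x + bitz Y (2*c+2-x) ≥ 1 := by
      rcases o1 with h | h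
      · have := hΛ x h; omega
      · rcases o2 with h' | h' <;> omega
    split_ifs at e1 e2 f1 f2 <;> omega

theorem invariant_reach {m n : ℕ} {c : ℤ} (hm : 1 ≤ m) (hmn : m ≤ n)
    (hc : 2*c = (n:ℤ) - m) {Y : Finset (ℕ × ℕ)} (hY : Reach m (n + 1) Y) :
    Good m n c Y := by
  induction hY with
  | refl => exact good_rect m n c hm hmn hc
  | tail hR hM ih => exact good_step hm hmn hc ih hM

theorem final {m n : ℕ} {c : ℤ} (hm : 1 ≤ m) (hmn : m ≤ n)
    (hc : 2*c = (n:ℤ) - m) {Y : Finset (ℕ × ℕ)} (hY : Reach m (n + 1) Y) :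
    dk Y c = dk Y (c + 1) := by
  have hG := invariant_reach hm hmn hc hY
  have h1 := hG.2.2 (c + 1)
  rw [show (2*c+2-(c+1) : ℤ) = c + 1 by ring] at h1
  have h2 := bitz01 hG.1 (c + 1)
  unfold bitz at h1 h2
  rw [if_pos (by omega), show (c+1-1 : ℤ) = c by ring] at h1 h2
  rcases h2 with h | h
  · have := h1 h; omega
  · omega


end MH9

theorem stmt9 (m n : ℕ) (hm : 1 ≤ m) (hmn : m ≤ n) (heven : Even (m + n))
    (c : ℤ) (hc : 2 * c = (n : ℤ) - (m : ℤ))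
    (Y : Finset (ℕ × ℕ)) (hY : Reach m (n + 1) Y) :
    dk Y c = dk Y (c + 1) :=
  MH9.final hm hmn hc hY
end
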